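/- arXiv:2402.19175 — 6 statements merged into one kernel-verified Lean document; each statement's English description precedes it below -/
import Mathlib

section
/- Let n ≥ 1 and let w ∈ S_{n+1} be fixed. Then Σ_{σ ∈ Sym(n)} 𝐲^{Ino(w,σ)} · 𝐭^{Asc(λ(w,σ))} = Σ_{σ ∈ Sym(n)} 𝐲^{Ino(w,σ)} · 𝐭^{Des(σ)}, as an identity in the polynomial ring ℤ[y_2,…,y_{n+1}, t_1,…,t_{n−1}]. -/
open scoped Classical
open MvPolynomial

/-- min of the values (in `{1,…,n+1}`, i.e. `(w p).val + 1`) of the block left of bar `σ i`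
at step `i+1` (0-indexed step `i`) of the merging process of `(w,σ)`. -/
noncomputable def minL (n : ℕ) (w : Equiv.Perm (Fin (n+1))) (σ : Equiv.Perm (Fin n)) (i : Fin n) : ℕ :=
  sInf {v : ℕ | ∃ p : Fin (n+1), p.val ≤ (σ i).val ∧
    (∀ j : Fin n, p.val ≤ j.val → j.val < (σ i).val → σ.symm j < i) ∧ v = (w p).val + 1}

/-- min of the values of the block right of bar `σ i` at step `i+1`. -/
noncomputable def minR (n : ℕ) (w : Equiv.Perm (Fin (n+1))) (σ : Equiv.Perm (Fin n)) (i : Fin n) : ℕ :=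
  sInf {v : ℕ | ∃ q : Fin (n+1), (σ i).val < q.val ∧
    (∀ j : Fin n, (σ i).val < j.val → j.val < q.val → σ.symm j < i) ∧ v = (w q).val + 1}

/-- `λ_{i+1}` of the pair `(w,σ)`: `max{min B, min B'}` with positive sign iff `min B < min B'`. -/
noncomputable def lam (n : ℕ) (w : Equiv.Perm (Fin (n+1))) (σ : Equiv.Perm (Fin n)) (i : Fin n) : ℤ :=
  if minL n w σ i < minR n w σ i then (max (minL n w σ i) (minR n w σ i) : ℤ)
  else -(max (minL n w σ i) (minR n w σ i) : ℤ)

/-- `ino(w,σ) = #{i : λ_i > 0}`. -/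
noncomputable def ino (n : ℕ) (w : Equiv.Perm (Fin (n+1))) (σ : Equiv.Perm (Fin n)) : ℕ :=
  (Finset.univ.filter fun i : Fin n => 0 < lam n w σ i).card

/-- `des(σ) = #{i ∈ {1,…,n−1} : σ(i) > σ(i+1)}` (0-indexed). -/
noncomputable def des (n : ℕ) (σ : Equiv.Perm (Fin n)) : ℕ :=
  (Finset.univ.filter fun k : Fin n => ∃ h : k.val + 1 < n, σ ⟨k.val + 1, h⟩ < σ k).card

/-- `asc(λ(w,σ)) = #{i ∈ {1,…,n−1} : λ_i < λ_{i+1}}` (0-indexed). -/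
noncomputable def asc (n : ℕ) (w : Equiv.Perm (Fin (n+1))) (σ : Equiv.Perm (Fin n)) : ℕ :=
  (Finset.univ.filter fun k : Fin n => ∃ h : k.val + 1 < n, lam n w σ k < lam n w σ ⟨k.val + 1, h⟩).card

/-- The monomial `𝐲^{Ino(w,σ)} = Π_{v ∈ Ino(w,σ)} y_v` in
`ℤ[y_2,…,y_{n+1},t_1,…,t_{n−1}] = MvPolynomial (Fin n ⊕ Fin (n-1)) ℤ`, where the variable
`y_v` (for `v ∈ {2,…,n+1}`) is `X (Sum.inl ⟨v-2⟩)`; note `v ∈ Ino(w,σ)` iff some `λ_i = v`. -/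
noncomputable def yIno (n : ℕ) (w : Equiv.Perm (Fin (n+1))) (σ : Equiv.Perm (Fin n)) :
    MvPolynomial (Fin n ⊕ Fin (n-1)) ℤ :=
  ∏ v : Fin n, if ∃ i : Fin n, lam n w σ i = (v.val : ℤ) + 2 then X (Sum.inl v) else 1

/-- The monomial `𝐭^{Des(σ)}`, where the variable `t_k` (for `k ∈ {1,…,n−1}`) is
`X (Sum.inr ⟨k-1⟩)`. -/
noncomputable def tDes (n : ℕ) (σ : Equiv.Perm (Fin n)) :
    MvPolynomial (Fin n ⊕ Fin (n-1)) ℤ :=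
  ∏ k : Fin (n-1),
    if σ ⟨k.val + 1, by have := k.2; omega⟩ < σ ⟨k.val, by have := k.2; omega⟩
    then X (Sum.inr k) else 1

/-- The monomial `𝐭^{Asc(λ(w,σ))}`. -/
noncomputable def tAsc (n : ℕ) (w : Equiv.Perm (Fin (n+1))) (σ : Equiv.Perm (Fin n)) :
    MvPolynomial (Fin n ⊕ Fin (n-1)) ℤ :=
  ∏ k : Fin (n-1),
    if lam n w σ ⟨k.val, by have := k.2; omega⟩ < lam n w σ ⟨k.val + 1, by have := k.2; omega⟩
    then X (Sum.inr k) else 1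


namespace InoAux



variable (n : ℕ) (w : Equiv.Perm (Fin (n+1)))

/-- min of block left of bar `b` when the set of removed bars is `S`. -/
noncomputable def mL (S : Set (Fin n)) (b : Fin n) : ℕ :=
  sInf {v : ℕ | ∃ p : Fin (n+1), p.val ≤ b.val ∧
    (∀ j : Fin n, p.val ≤ j.val → j.val < b.val → j ∈ S) ∧ v = (w p).val + 1}

/-- min of block right of bar `b`. -/
noncomputable def mR (S : Set (Fin n)) (b : Fin n) : ℕ :=
  sInf {v : ℕ | ∃ q : Fin (n+1), b.val < q.val ∧
    (∀ j : Fin n, b.val < j.val → j.val < q.val → j ∈ S) ∧ v = (w q).val + 1}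

/-- signed dying value when removing bar `b` after the bars in `S`. -/
noncomputable def dv (S : Set (Fin n)) (b : Fin n) : ℤ :=
  if mL n w S b < mR n w S b then (max (mL n w S b) (mR n w S b) : ℤ)
  else -(max (mL n w S b) (mR n w S b) : ℤ)

variable {n w}

lemma mL_mem (S : Set (Fin n)) (b : Fin n) :
    ∃ p : Fin (n+1), p.val ≤ b.val ∧
      (∀ j : Fin n, p.val ≤ j.val → j.val < b.val → j ∈ S) ∧ mL n w S b = (w p).val + 1 := by
  have hne : {v : ℕ | ∃ p : Fin (n+1), p.val ≤ b.val ∧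
      (∀ j : Fin n, p.val ≤ j.val → j.val < b.val → j ∈ S) ∧ v = (w p).val + 1}.Nonempty := by
    refine ⟨(w ⟨b.val, by omega⟩).val + 1, ⟨b.val, by omega⟩, le_refl _, ?_, rfl⟩
    intro j hj1 hj2; simp only [Fin.val_mk] at hj1; omega
  obtain ⟨p, h1, h2, h3⟩ := Nat.sInf_mem hne
  exact ⟨p, h1, h2, h3⟩

lemma mR_mem (S : Set (Fin n)) (b : Fin n) :
    ∃ q : Fin (n+1), b.val < q.val ∧
      (∀ j : Fin n, b.val < j.val → j.val < q.val → j ∈ S) ∧ mR n w S b = (w q).val + 1 := by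
  have hne : {v : ℕ | ∃ q : Fin (n+1), b.val < q.val ∧
      (∀ j : Fin n, b.val < j.val → j.val < q.val → j ∈ S) ∧ v = (w q).val + 1}.Nonempty := by
    refine ⟨(w ⟨b.val + 1, by omega⟩).val + 1, ⟨b.val + 1, by omega⟩, by simp, ?_, rfl⟩
    intro j hj1 hj2; simp only [Fin.val_mk] at hj2; omega
  obtain ⟨q, h1, h2, h3⟩ := Nat.sInf_mem hne
  exact ⟨q, h1, h2, h3⟩

lemma mL_le (S : Set (Fin n)) (b : Fin n) (p : Fin (n+1)) (h1 : p.val ≤ b.val)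
    (h2 : ∀ j : Fin n, p.val ≤ j.val → j.val < b.val → j ∈ S) :
    mL n w S b ≤ (w p).val + 1 :=
  Nat.sInf_le ⟨p, h1, h2, rfl⟩

lemma mR_le (S : Set (Fin n)) (b : Fin n) (q : Fin (n+1)) (h1 : b.val < q.val)
    (h2 : ∀ j : Fin n, b.val < j.val → j.val < q.val → j ∈ S) :
    mR n w S b ≤ (w q).val + 1 :=
  Nat.sInf_le ⟨q, h1, h2, rfl⟩

lemma val_inj {p q : Fin (n+1)} (h : (w p).val + 1 = (w q).val + 1) : p = q :=
  w.injective (Fin.ext (by omega))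

/-- congruence: membership matters only for bars left of `b`. -/
lemma mL_congr {S S' : Set (Fin n)} (b : Fin n)
    (h : ∀ j : Fin n, j.val < b.val → (j ∈ S ↔ j ∈ S')) : mL n w S b = mL n w S' b := by
  unfold mL; congr 1; ext v
  constructor <;> rintro ⟨p, h1, h2, h3⟩
  · exact ⟨p, h1, fun j hj1 hj2 => (h j hj2).1 (h2 j hj1 hj2), h3⟩
  · exact ⟨p, h1, fun j hj1 hj2 => (h j hj2).2 (h2 j hj1 hj2), h3⟩

lemma mR_congr {S S' : Set (Fin n)} (b : Fin n)
    (h : ∀ j : Fin n, b.val < j.val → (j ∈ S ↔ j ∈ S')) : mR n w S b = mR n w S' b := by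
  unfold mR; congr 1; ext v
  constructor <;> rintro ⟨q, h1, h2, h3⟩
  · exact ⟨q, h1, fun j hj1 hj2 => (h j hj1).1 (h2 j hj1 hj2), h3⟩
  · exact ⟨q, h1, fun j hj1 hj2 => (h j hj1).2 (h2 j hj1 hj2), h3⟩

/-- if a bar `j0 < b` is missing from both sets, only bars in `(j0,b)` matter for `mL`. -/
lemma mL_congr' {S S' : Set (Fin n)} (b j0 : Fin n) (hj0 : j0.val < b.val)
    (h0 : j0 ∉ S) (h0' : j0 ∉ S')
    (h : ∀ j : Fin n, j0.val < j.val → j.val < b.val → (j ∈ S ↔ j ∈ S')) :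
    mL n w S b = mL n w S' b := by
  unfold mL; congr 1; ext v
  constructor <;> rintro ⟨p, h1, h2, h3⟩
  · have hp : j0.val < p.val := by
      by_contra hc
      exact h0 (h2 j0 (by omega) hj0)
    exact ⟨p, h1, fun j hj1 hj2 => (h j (by omega) hj2).1 (h2 j hj1 hj2), h3⟩
  · have hp : j0.val < p.val := by
      by_contra hc
      exact h0' (h2 j0 (by omega) hj0)
    exact ⟨p, h1, fun j hj1 hj2 => (h j (by omega) hj2).2 (h2 j hj1 hj2), h3⟩

lemma mR_congr' {S S' : Set (Fin n)} (b j0 : Fin n) (hj0 : b.val < j0.val)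
    (h0 : j0 ∉ S) (h0' : j0 ∉ S')
    (h : ∀ j : Fin n, b.val < j.val → j.val < j0.val → (j ∈ S ↔ j ∈ S')) :
    mR n w S b = mR n w S' b := by
  unfold mR; congr 1; ext v
  constructor <;> rintro ⟨q, h1, h2, h3⟩
  · have hq : q.val ≤ j0.val := by
      by_contra hc
      exact h0 (h2 j0 hj0 (by omega))
    exact ⟨q, h1, fun j hj1 hj2 => (h j hj1 (by omega)).1 (h2 j hj1 hj2), h3⟩
  · have hq : q.val ≤ j0.val := by
      by_contra hc
      exact h0' (h2 j0 hj0 (by omega))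
    exact ⟨q, h1, fun j hj1 hj2 => (h j hj1 (by omega)).2 (h2 j hj1 hj2), h3⟩



variable {n : ℕ} {w : Equiv.Perm (Fin (n+1))}

section glem
variable {S : Set (Fin n)} {b b' : Fin n}

/-- In the interacting case with `b < b'`, the left block of `b'` equals the right block of `b`. -/
lemma g1 (hlt : b.val < b'.val) (hb : b ∉ S) (hb' : b' ∉ S)
    (K : ∀ j : Fin n, b.val < j.val → j.val < b'.val → j ∈ S) :
    mL n w S b' = mR n w S b := by
  apply le_antisymm
  · obtain ⟨q, h1, h2, h3⟩ := mR_mem (w := w) S b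
    have hq : q.val ≤ b'.val := by
      by_contra hc
      exact hb' (h2 b' hlt (by omega))
    rw [h3]
    exact mL_le S b' q hq (fun j hj1 hj2 => K j (by omega) hj2)
  · obtain ⟨p, h1, h2, h3⟩ := mL_mem (w := w) S b'
    have hp : b.val < p.val := by
      by_contra hc
      exact hb (h2 b (by omega) hlt)
    rw [h3]
    exact mR_le S b p hp (fun j hj1 hj2 => K j hj1 (by omega))

/-- interacting case: left block of `b'` after removing `b` is the union of the two blocks of `b`. -/
lemma g2 (hlt : b.val < b'.val) (hb : b ∉ S) (hb' : b' ∉ S)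
    (K : ∀ j : Fin n, b.val < j.val → j.val < b'.val → j ∈ S) :
    mL n w (insert b S) b' = min (mL n w S b) (mR n w S b) := by
  apply le_antisymm
  · apply le_min
    · obtain ⟨p, h1, h2, h3⟩ := mL_mem (w := w) S b
      rw [h3]
      refine mL_le _ b' p (by omega) (fun j hj1 hj2 => ?_)
      rcases lt_trichotomy j.val b.val with h | h | h
      · exact Set.mem_insert_of_mem _ (h2 j hj1 h)
      · have : j = b := Fin.ext h
        exact this ▸ Set.mem_insert _ _
      · exact Set.mem_insert_of_mem _ (K j h hj2)
    · obtain ⟨q, h1, h2, h3⟩ := mR_mem (w := w) S b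
      have hq : q.val ≤ b'.val := by
        by_contra hc
        exact hb' (h2 b' hlt (by omega))
      rw [h3]
      exact mL_le _ b' q hq (fun j hj1 hj2 => Set.mem_insert_of_mem _ (K j (by omega) hj2))
  · obtain ⟨p, h1, h2, h3⟩ := mL_mem (w := w) (insert b S) b'
    rcases le_or_gt p.val b.val with hp | hp
    · refine le_trans (min_le_left _ _) ?_
      rw [h3]
      refine mL_le S b p hp (fun j hj1 hj2 => ?_)
      rcases h2 j hj1 (by omega) with h | h
      · exact absurd (congrArg Fin.val h) (by omega)
      · exact h
    · refine le_trans (min_le_right _ _) ?_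
      rw [h3]
      exact mR_le S b p hp (fun j hj1 hj2 => K j hj1 (by omega))

/-- interacting case: right block of `b` after removing `b'` is the union of the two blocks of `b'`. -/
lemma g3 (hlt : b.val < b'.val) (hb : b ∉ S) (hb' : b' ∉ S)
    (K : ∀ j : Fin n, b.val < j.val → j.val < b'.val → j ∈ S) :
    mR n w (insert b' S) b = min (mR n w S b) (mR n w S b') := by
  apply le_antisymm
  · apply le_min
    · obtain ⟨q, h1, h2, h3⟩ := mR_mem (w := w) S b
      rw [h3]
      exact mR_le _ b q h1 (fun j hj1 hj2 => Set.mem_insert_of_mem _ (h2 j hj1 hj2))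
    · obtain ⟨q, h1, h2, h3⟩ := mR_mem (w := w) S b'
      rw [h3]
      refine mR_le _ b q (by omega) (fun j hj1 hj2 => ?_)
      rcases lt_trichotomy j.val b'.val with h | h | h
      · exact Set.mem_insert_of_mem _ (K j hj1 h)
      · have : j = b' := Fin.ext h
        exact this ▸ Set.mem_insert _ _
      · exact Set.mem_insert_of_mem _ (h2 j h hj2)
  · obtain ⟨q, h1, h2, h3⟩ := mR_mem (w := w) (insert b' S) b
    rcases le_or_gt q.val b'.val with hq | hq
    · refine le_trans (min_le_left _ _) ?_
      rw [h3]
      exact mR_le S b q h1 (fun j hj1 hj2 => K j hj1 (by omega))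
    · refine le_trans (min_le_right _ _) ?_
      rw [h3]
      refine mR_le S b' q hq (fun j hj1 hj2 => ?_)
      rcases h2 j (by omega) hj2 with h | h
      · exact absurd (congrArg Fin.val h) (by omega)
      · exact h

lemma mL_ne_mR (S : Set (Fin n)) (b : Fin n) : mL n w S b ≠ mR n w S b := by
  obtain ⟨p, hp, _, h3⟩ := mL_mem (w := w) S b
  obtain ⟨q, hq, _, h4⟩ := mR_mem (w := w) S b
  rw [h3, h4]
  intro h
  have := val_inj h
  omega

lemma mR_ne_mR (hlt : b.val < b'.val) (hb' : b' ∉ S) :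
    mR n w S b ≠ mR n w S b' := by
  obtain ⟨q, hq, h2, h3⟩ := mR_mem (w := w) S b
  obtain ⟨q', hq', _, h4⟩ := mR_mem (w := w) S b'
  have : q.val ≤ b'.val := by
    by_contra hc
    exact hb' (h2 b' hlt (by omega))
  rw [h3, h4]
  intro h
  have := val_inj h
  omega

lemma mL_ne_mR' (hlt : b.val < b'.val) : mL n w S b ≠ mR n w S b' := by
  obtain ⟨p, hp, _, h3⟩ := mL_mem (w := w) S b
  obtain ⟨q, hq, _, h4⟩ := mR_mem (w := w) S b'
  rw [h3, h4]
  intro h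
  have := val_inj h
  omega

end glem

/-- The heart lemma: removing `b` then `b'` versus `b'` then `b`: either the two assigned
signed values are unchanged, or the comparison of the signed values is tied to the bars. -/
theorem heart (S : Set (Fin n)) (b b' : Fin n) (hne : b ≠ b') (hb : b ∉ S) (hb' : b' ∉ S) :
    (dv n w S b = dv n w (insert b' S) b ∧ dv n w (insert b S) b' = dv n w S b')
    ∨ ((dv n w S b < dv n w (insert b S) b') ↔ b' < b) := by
  have hvne : b.val ≠ b'.val := fun h => hne (Fin.ext h)
  rcases hvne.lt_or_gt with hlt | hlt
  · -- b < b'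
    by_cases K : ∀ j : Fin n, b.val < j.val → j.val < b'.val → j ∈ S
    · have e1 : mL n w (insert b' S) b = mL n w S b :=
        mL_congr b (fun j hj => by
          constructor
          · rintro (h | h)
            · exact absurd (congrArg Fin.val h) (by omega)
            · exact h
          · exact fun h => Set.mem_insert_of_mem _ h)
      have e2 : mR n w (insert b S) b' = mR n w S b' :=
        mR_congr b' (fun j hj => by
          constructor
          · rintro (h | h)
            · exact absurd (congrArg Fin.val h) (by omega)
            · exact h
          · exact fun h => Set.mem_insert_of_mem _ h)
      have e3 := g1 (w := w) hlt hb hb' K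
      have e4 := g2 (w := w) hlt hb hb' K
      have e5 := g3 (w := w) hlt hb hb' K
      have d1 := mL_ne_mR (w := w) S b
      have d2 := mR_ne_mR (w := w) hlt hb'
      have d3 := mL_ne_mR' (w := w) (S := S) (b := b) (b' := b') hlt
      have hbb : ¬ (b' < b) := by
        rw [Fin.lt_def]; omega
      unfold dv
      rw [e1, e2, e4, e5]
      split_ifs <;> simp only [hbb, iff_false, not_lt] <;> omega
    · push_neg at K
      obtain ⟨j0, hj1, hj2, hj0⟩ := K
      left
      have hj0' : j0 ∉ insert b' S := by
        intro h
        rcases h with h | h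
        · exact absurd (congrArg Fin.val h) (by omega)
        · exact hj0 h
      have hj0'' : j0 ∉ insert b S := by
        intro h
        rcases h with h | h
        · exact absurd (congrArg Fin.val h) (by omega)
        · exact hj0 h
      constructor
      · unfold dv
        rw [mL_congr (S := S) (S' := insert b' S) b (fun j hj => by
              constructor
              · exact fun h => Set.mem_insert_of_mem _ h
              · rintro (h | h)
                · exact absurd (congrArg Fin.val h) (by omega)
                · exact h),
            mR_congr' (w := w) b j0 hj1 hj0 hj0' (fun j ha hb => by
              constructor
              · exact fun h => Set.mem_insert_of_mem _ h
              · rintro (h | h)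
                · exact absurd (congrArg Fin.val h) (by omega)
                · exact h)]
      · unfold dv
        rw [mL_congr' (w := w) b' j0 hj2 hj0'' hj0 (fun j ha hb => by
              constructor
              · rintro (h | h)
                · exact absurd (congrArg Fin.val h) (by omega)
                · exact h
              · exact fun h => Set.mem_insert_of_mem _ h),
            mR_congr (S := insert b S) (S' := S) b' (fun j hj => by
              constructor
              · rintro (h | h)
                · exact absurd (congrArg Fin.val h) (by omega)
                · exact h
              · exact fun h => Set.mem_insert_of_mem _ h)]
  · -- b' < b
    by_cases K : ∀ j : Fin n, b'.val < j.val → j.val < b.val → j ∈ S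
    · have e1 : mR n w (insert b' S) b = mR n w S b :=
        mR_congr b (fun j hj => by
          constructor
          · rintro (h | h)
            · exact absurd (congrArg Fin.val h) (by omega)
            · exact h
          · exact fun h => Set.mem_insert_of_mem _ h)
      have e2 : mL n w (insert b S) b' = mL n w S b' :=
        mL_congr b' (fun j hj => by
          constructor
          · rintro (h | h)
            · exact absurd (congrArg Fin.val h) (by omega)
            · exact h
          · exact fun h => Set.mem_insert_of_mem _ h)
      have e3 := g1 (w := w) (b := b') (b' := b) hlt hb' hb K
      have e4 := g2 (w := w) (b := b') (b' := b) hlt hb' hb K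
      have e5 := g3 (w := w) (b := b') (b' := b) hlt hb' hb K
      have d1 := mL_ne_mR (w := w) S b'
      have d2 := mR_ne_mR (w := w) (b := b') (b' := b) hlt hb
      have d3 := mL_ne_mR' (w := w) (S := S) (b := b') (b' := b) hlt
      have hbb : b' < b := by
        rw [Fin.lt_def]; omega
      unfold dv
      rw [e1, e2, e3, e4, e5]
      split_ifs <;> simp only [hbb, iff_true] <;> omega
    · push_neg at K
      obtain ⟨j0, hj1, hj2, hj0⟩ := K
      left
      have hj0' : j0 ∉ insert b' S := by
        intro h
        rcases h with h | h
        · exact absurd (congrArg Fin.val h) (by omega)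
        · exact hj0 h
      have hj0'' : j0 ∉ insert b S := by
        intro h
        rcases h with h | h
        · exact absurd (congrArg Fin.val h) (by omega)
        · exact hj0 h
      constructor
      · unfold dv
        rw [mL_congr' (w := w) b j0 hj2 hj0 hj0' (fun j ha hb => by
              constructor
              · exact fun h => Set.mem_insert_of_mem _ h
              · rintro (h | h)
                · exact absurd (congrArg Fin.val h) (by omega)
                · exact h),
            mR_congr (S := S) (S' := insert b' S) b (fun j hj => by
              constructor
              · exact fun h => Set.mem_insert_of_mem _ h
              · rintro (h | h)
                · exact absurd (congrArg Fin.val h) (by omega)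
                · exact h)]
      · unfold dv
        rw [mL_congr (S := insert b S) (S' := S) b' (fun j hj => by
              constructor
              · rintro (h | h)
                · exact absurd (congrArg Fin.val h) (by omega)
                · exact h
              · exact fun h => Set.mem_insert_of_mem _ h),
            mR_congr' (w := w) b' j0 hj1 hj0'' hj0 (fun j ha hb => by
              constructor
              · rintro (h | h)
                · exact absurd (congrArg Fin.val h) (by omega)
                · exact h
              · exact fun h => Set.mem_insert_of_mem _ h)]

variable {σ : Equiv.Perm (Fin n)}

/-- set of bars removed before step `i`. -/
def Sset (σ : Equiv.Perm (Fin n)) (i : Fin n) : Set (Fin n) := {j | σ.symm j < i}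

lemma minL_eq (i : Fin n) : minL n w σ i = mL n w (Sset σ i) (σ i) := rfl

lemma minR_eq (i : Fin n) : minR n w σ i = mR n w (Sset σ i) (σ i) := rfl

lemma lam_eq (i : Fin n) : lam n w σ i = dv n w (Sset σ i) (σ i) := rfl

lemma Sset_mono {i i' : Fin n} (h : i < i') : Sset σ i ⊆ Sset σ i' :=
  fun _ hj => lt_trans hj h

lemma self_notMem_Sset (i : Fin n) : σ i ∉ Sset σ i := by
  simp [Sset]

lemma self_mem_Sset {i i' : Fin n} (h : i < i') : σ i ∈ Sset σ i' := by
  simp [Sset, h]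

/-- A value, once dead, never reappears as a block minimum adjacent to a removed bar. -/
lemma no_reappear {S' : Set (Fin n)} {b' : Fin n} {P P'' : Fin (n+1)}
    (hPP : P ≠ P'')
    (hb' : b' ∉ S')
    (hbetween : ∀ j : Fin n, min P.val P''.val ≤ j.val → j.val < max P.val P''.val → j ∈ S')
    (hlt : (w P'').val < (w P).val)
    (hv : max (mL n w S' b') (mR n w S' b') = (w P).val + 1) : False := by
  have hPv : P.val ≠ P''.val := fun h => hPP (Fin.ext h)
  rcases max_choice (mL n w S' b') (mR n w S' b') with hmax | hmax
  · -- the max is attained by the left block: `P` is a valid left start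
    rw [hmax] at hv
    obtain ⟨p, hp1, hp2, hp3⟩ := mL_mem (w := w) S' b'
    have hpP : p = P := val_inj (w := w) (by omega)
    rw [hpP] at hp1 hp2
    -- show P'' is a valid left start
    have hP''le : P''.val ≤ b'.val := by
      rcases hPv.lt_or_gt with hc | hc
      · by_contra hcon
        exact hb' (hbetween b' (by omega) (by omega))
      · omega
    have hvalid : ∀ j : Fin n, P''.val ≤ j.val → j.val < b'.val → j ∈ S' := by
      intro j hj1 hj2
      rcases lt_or_ge j.val P.val with hc | hc
      · rcases hPv.lt_or_gt with hd | hd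
        · -- P < P'' : then j.val < P.val ≤ min, impossible with P''.val ≤ j.val? no: min = P
          exact hbetween j (by omega) (by omega)
        · exact hbetween j (by omega) (by omega)
      · exact hp2 j hc hj2
    have := mL_le (w := w) S' b' P'' hP''le hvalid
    omega
  · rw [hmax] at hv
    obtain ⟨q, hq1, hq2, hq3⟩ := mR_mem (w := w) S' b'
    have hqP : q = P := val_inj (w := w) (by omega)
    rw [hqP] at hq1 hq2
    have hP''gt : b'.val < P''.val := by
      rcases hPv.lt_or_gt with hc | hc
      · omega
      · by_contra hcon
        exact hb' (hbetween b' (by omega) (by omega))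
    have hvalid : ∀ j : Fin n, b'.val < j.val → j.val < P''.val → j ∈ S' := by
      intro j hj1 hj2
      rcases lt_or_ge j.val P.val with hc | hc
      · exact hq2 j hj1 hc
      · rcases hPv.lt_or_gt with hd | hd
        · exact hbetween j (by omega) (by omega)
        · exact hbetween j (by omega) (by omega)
    have := mR_le (w := w) S' b' P'' hP''gt hvalid
    omega

/-- the unsigned dying value at step `i`. -/
noncomputable def mx (σ : Equiv.Perm (Fin n)) (i : Fin n) : ℕ :=
  max (minL n w σ i) (minR n w σ i)

lemma mx_ne_aux {i i' : Fin n} (h : i < i') : mx (w := w) σ i ≠ mx (w := w) σ i' := by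
  intro heq
  obtain ⟨pL, hp1, hp2, hp3⟩ := mL_mem (w := w) (Sset σ i) (σ i)
  obtain ⟨qR, hq1, hq2, hq3⟩ := mR_mem (w := w) (Sset σ i) (σ i)
  have hpq : pL.val ≤ (σ i).val ∧ (σ i).val < qR.val := ⟨hp1, hq1⟩
  have hne := mL_ne_mR (w := w) (Sset σ i) (σ i)
  have hsub : Sset σ i ⊆ Sset σ i' := Sset_mono h
  have hbmem : σ i ∈ Sset σ i' := self_mem_Sset h
  have hb' : σ i' ∉ Sset σ i' := self_notMem_Sset i'
  have hbetween : ∀ j : Fin n, min pL.val qR.val ≤ j.val → j.val < max pL.val qR.val →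
      j ∈ Sset σ i' := by
    intro j hj1 hj2
    rcases lt_trichotomy j.val (σ i).val with hc | hc | hc
    · exact hsub (hp2 j (by omega) hc)
    · have : j = σ i := Fin.ext hc
      exact this ▸ hbmem
    · exact hsub (hq2 j hc (by omega))
  have hmxi : mx (w := w) σ i = max (mL n w (Sset σ i) (σ i)) (mR n w (Sset σ i) (σ i)) := rfl
  have hmxi' : mx (w := w) σ i' =
      max (mL n w (Sset σ i') (σ i')) (mR n w (Sset σ i') (σ i')) := rfl
  rcases hne.lt_or_gt with hcase | hcase
  · -- max = mR = u qR, min = mL = u pL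
    refine no_reappear (w := w) (P := qR) (P'' := pL) (fun hh => ?_) hb'
      (by intro j hj1 hj2; exact hbetween j (by omega) (by omega)) (by omega) ?_
    · rw [hh] at hq1; omega
    · rw [← hmxi', ← heq, hmxi]; omega
  · refine no_reappear (w := w) (P := pL) (P'' := qR) (fun hh => ?_) hb'
      (by intro j hj1 hj2; exact hbetween j (by omega) (by omega)) (by omega) ?_
    · rw [hh] at hp1; omega
    · rw [← hmxi', ← heq, hmxi]; omega

lemma mx_inj {i i' : Fin n} (h : i ≠ i') : mx (w := w) σ i ≠ mx (w := w) σ i' := by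
  rcases h.lt_or_gt with hc | hc
  · exact mx_ne_aux hc
  · exact fun he => (mx_ne_aux hc) he.symm

lemma lam_natAbs (i : Fin n) : (lam n w σ i).natAbs = mx (w := w) σ i := by
  unfold lam mx
  split_ifs <;> simp [← Nat.cast_max]

lemma lam_inj {i i' : Fin n} (h : i ≠ i') : lam n w σ i ≠ lam n w σ i' := by
  intro he
  exact mx_inj (w := w) h (by rw [← lam_natAbs, ← lam_natAbs, he])


section Abstract

variable {M : Type*} [CommSemiring M]

lemma flt1 (k : Fin (n-1)) : (k : ℕ) < n := lt_of_lt_of_le k.2 (Nat.sub_le n 1)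
lemma flt2 (k : Fin (n-1)) : (k : ℕ) + 1 < n := by have := k.2; omega

/-- ascent-set monomial of the sequence `f (σ 0), …, f (σ (n-1))`. -/
noncomputable def ascProd (t : Fin (n-1) → M) (f : Fin n → ℤ) (σ : Equiv.Perm (Fin n)) : M :=
  ∏ k : Fin (n-1), if f (σ ⟨k.val, flt1 k⟩) < f (σ ⟨k.val + 1, flt2 k⟩) then t k else 1

/-- the label-swapped function. -/
noncomputable def swapf (f : Fin n → ℤ) (x y : Fin n) : Fin n → ℤ :=
  fun z => if z = x then f y else if z = y then f x else f z

variable {f : Fin n → ℤ} {x y : Fin n}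

lemma swapf_x (hxy : x ≠ y) : swapf f x y x = f y := by simp [swapf]

lemma swapf_y (hxy : x ≠ y) : swapf f x y y = f x := by simp [swapf, hxy.symm]

lemma swapf_other {z : Fin n} (hzx : z ≠ x) (hzy : z ≠ y) : swapf f x y z = f z := by
  simp [swapf, hzx, hzy]

lemma swapf_eq : swapf f x y = f ∘ Equiv.swap x y := by
  funext z
  simp only [swapf, Function.comp_apply, Equiv.swap_apply_def]
  split_ifs <;> rfl

lemma swapf_inj (hf : Function.Injective f) : Function.Injective (swapf f x y) := by
  rw [swapf_eq]
  exact hf.comp (Equiv.injective _)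

lemma key_comp (hf : Function.Injective f) (hxy : f x < f y)
    (hcons : ∀ z, ¬(f x < f z ∧ f z < f y)) {z : Fin n} (hzx : z ≠ x) (hzy : z ≠ y) :
    (f z < f x ↔ f z < f y) ∧ (f x < f z ↔ f y < f z) := by
  have hc := hcons z
  have d1 : f z ≠ f x := fun h => hzx (hf h)
  have d2 : f z ≠ f y := fun h => hzy (hf h)
  omega

lemma hxy_ne (hxy : f x < f y) : x ≠ y := fun h => by rw [h] at hxy; omega

/-- comparisons after a label swap agree with original comparisons, except on `{x,y}`. -/
lemma Lcomp (hf : Function.Injective f) (hxy : f x < f y)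
    (hcons : ∀ z, ¬(f x < f z ∧ f z < f y)) (u v : Fin n)
    (h1 : ¬(u = x ∧ v = y)) (h2 : ¬(u = y ∧ v = x)) :
    (swapf f x y u < swapf f x y v ↔ f u < f v) := by
  have hne := hxy_ne hxy
  rcases eq_or_ne u x with h | hux
  · rcases eq_or_ne v x with h' | hvx
    · rw [h, h']
      simp
    · rcases eq_or_ne v y with h' | hvy
      · exact absurd ⟨h, h'⟩ h1
      · rw [h, swapf_x hne, swapf_other hvx hvy]
        exact ((key_comp hf hxy hcons hvx hvy).2).symm
  · rcases eq_or_ne u y with h | huy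
    · rcases eq_or_ne v x with h' | hvx
      · exact absurd ⟨h, h'⟩ h2
      · rcases eq_or_ne v y with h' | hvy
        · rw [h, h']
          simp
        · rw [h, swapf_y hne, swapf_other hvx hvy]
          exact (key_comp hf hxy hcons hvx hvy).2
    · rcases eq_or_ne v x with h' | hvx
      · rw [h', swapf_other hux huy, swapf_x hne]
        exact ((key_comp hf hxy hcons hux huy).1).symm
      · rcases eq_or_ne v y with h' | hvy
        · rw [h', swapf_other hux huy, swapf_y hne]
          exact (key_comp hf hxy hcons hux huy).1
        · rw [swapf_other hux huy, swapf_other hvx hvy]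

lemma mul_swap_apply (σ : Equiv.Perm (Fin n)) (a b c : Fin n) :
    (σ * Equiv.swap a b) c = σ (Equiv.swap a b c) := rfl

lemma mul_swap_symm_apply (σ : Equiv.Perm (Fin n)) (a b c : Fin n) :
    (σ * Equiv.swap a b).symm c = Equiv.swap a b (σ.symm c) := by
  rw [Equiv.Perm.mul_def]
  simp [Equiv.symm_trans_apply]

end Abstract


section Abstract2

variable {M : Type*} [CommSemiring M]

/-- pointwise effect of swapping two adjacent letters `a,b` (which carry the labels `x,y`)
on the ascent monomial, after also swapping the labels. -/
lemma asc_swap_helper (t : Fin (n-1) → M) {f : Fin n → ℤ} {x y : Fin n}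
    (hxy : f x < f y) (σ : Equiv.Perm (Fin n)) (a b : Fin n)
    (hab : (a = x ∧ b = y) ∨ (a = y ∧ b = x))
    (p p' : Fin n) (hp : σ.symm a = p) (hp' : σ.symm b = p') (hpp : p.val + 1 = p'.val) :
    ascProd t (swapf f x y) (σ * Equiv.swap p p') = ascProd t f σ := by
  have hne := hxy_ne hxy
  have hsa : σ p = a := by rw [← hp, Equiv.apply_symm_apply]
  have hsb : σ p' = b := by rw [← hp', Equiv.apply_symm_apply]
  -- label identities
  have hswa : swapf f x y a = f b := by
    rcases hab with ⟨ha, hb⟩ | ⟨ha, hb⟩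
    · rw [ha, hb, swapf_x hne]
    · rw [ha, hb, swapf_y hne]
  have hswb : swapf f x y b = f a := by
    rcases hab with ⟨ha, hb⟩ | ⟨ha, hb⟩
    · rw [ha, hb, swapf_y hne]
    · rw [ha, hb, swapf_x hne]
  have hposx : σ.symm x = p ∨ σ.symm x = p' := by
    rcases hab with ⟨ha, hb⟩ | ⟨ha, hb⟩
    · exact Or.inl (by rw [← ha, hp])
    · exact Or.inr (by rw [← hb, hp'])
  have hposy : σ.symm y = p ∨ σ.symm y = p' := by
    rcases hab with ⟨ha, hb⟩ | ⟨ha, hb⟩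
    · exact Or.inr (by rw [← hb, hp'])
    · exact Or.inl (by rw [← ha, hp])
  unfold ascProd
  refine Finset.prod_congr rfl (fun k _ => ?_)
  set k0 : Fin n := ⟨k.val, flt1 k⟩ with hk0
  set k1 : Fin n := ⟨k.val + 1, flt2 k⟩ with hk1
  have hk0v : k0.val = k.val := rfl
  have hk1v : k1.val = k.val + 1 := rfl
  -- a letter at a position other than p, p' is not x nor y
  have hother : ∀ z : Fin n, z ≠ p → z ≠ p' → (σ z ≠ x ∧ σ z ≠ y) := by
    intro z hzp hzp'
    constructor
    · intro h
      have : σ.symm x = z := by rw [← h, Equiv.symm_apply_apply]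
      rcases hposx with hh | hh <;> rw [hh] at this
      · exact hzp this.symm
      · exact hzp' this.symm
    · intro h
      have : σ.symm y = z := by rw [← h, Equiv.symm_apply_apply]
      rcases hposy with hh | hh <;> rw [hh] at this
      · exact hzp this.symm
      · exact hzp' this.symm
  have hcase : k1.val < p.val ∨ k1.val = p.val ∨ k0.val = p.val ∨ k0.val = p'.val ∨
      p'.val < k0.val := by omega
  rcases hcase with hc | hc | hc | hc | hc
  · -- both positions below p : untouched
    have h0 : Equiv.swap p p' k0 = k0 :=
      Equiv.swap_apply_of_ne_of_ne (Fin.ne_of_val_ne (by omega)) (Fin.ne_of_val_ne (by omega))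
    have h1 : Equiv.swap p p' k1 = k1 :=
      Equiv.swap_apply_of_ne_of_ne (Fin.ne_of_val_ne (by omega)) (Fin.ne_of_val_ne (by omega))
    rw [mul_swap_apply, mul_swap_apply, h0, h1]
    have o0 := hother k0 (Fin.ne_of_val_ne (by omega)) (Fin.ne_of_val_ne (by omega))
    have o1 := hother k1 (Fin.ne_of_val_ne (by omega)) (Fin.ne_of_val_ne (by omega))
    rw [swapf_other o0.1 o0.2, swapf_other o1.1 o1.2]
  · -- k1 = p
    have hk1p : k1 = p := Fin.ext hc
    have h0 : Equiv.swap p p' k0 = k0 :=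
      Equiv.swap_apply_of_ne_of_ne (Fin.ne_of_val_ne (by omega)) (Fin.ne_of_val_ne (by omega))
    rw [mul_swap_apply, mul_swap_apply, h0, hk1p, Equiv.swap_apply_left, hsb]
    have o0 := hother k0 (Fin.ne_of_val_ne (by omega)) (Fin.ne_of_val_ne (by omega))
    rw [swapf_other o0.1 o0.2, hswb, hsa]
  · -- k0 = p, k1 = p'
    have hk0p : k0 = p := Fin.ext hc
    have hk1p : k1 = p' := Fin.ext (by omega)
    rw [mul_swap_apply, mul_swap_apply, hk0p, hk1p, Equiv.swap_apply_left,
      Equiv.swap_apply_right, hsa, hsb, hswb, hswa]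
  · -- k0 = p'
    have hk0p : k0 = p' := Fin.ext hc
    have h1 : Equiv.swap p p' k1 = k1 :=
      Equiv.swap_apply_of_ne_of_ne (Fin.ne_of_val_ne (by omega)) (Fin.ne_of_val_ne (by omega))
    rw [mul_swap_apply, mul_swap_apply, h1, hk0p, Equiv.swap_apply_right, hsa]
    have o1 := hother k1 (Fin.ne_of_val_ne (by omega)) (Fin.ne_of_val_ne (by omega))
    rw [swapf_other o1.1 o1.2, hswa, hsb]
  · -- both above p'
    have h0 : Equiv.swap p p' k0 = k0 :=
      Equiv.swap_apply_of_ne_of_ne (Fin.ne_of_val_ne (by omega)) (Fin.ne_of_val_ne (by omega))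
    have h1 : Equiv.swap p p' k1 = k1 :=
      Equiv.swap_apply_of_ne_of_ne (Fin.ne_of_val_ne (by omega)) (Fin.ne_of_val_ne (by omega))
    rw [mul_swap_apply, mul_swap_apply, h0, h1]
    have o0 := hother k0 (Fin.ne_of_val_ne (by omega)) (Fin.ne_of_val_ne (by omega))
    have o1 := hother k1 (Fin.ne_of_val_ne (by omega)) (Fin.ne_of_val_ne (by omega))
    rw [swapf_other o0.1 o0.2, swapf_other o1.1 o1.2]

end Abstract2


section Abstract3

variable {M : Type*} [CommSemiring M]

lemma step_bij (Ps : Finset (Equiv.Perm (Fin n))) (t : Fin (n-1) → M)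
    {f : Fin n → ℤ} {x y : Fin n} (hf : Function.Injective f) (hxy : f x < f y)
    (hcons : ∀ z, ¬(f x < f z ∧ f z < f y))
    (hswap : ∀ σ ∈ Ps, ∀ k k' : Fin n, k.val + 1 = k'.val →
      ((σ k = x ∧ σ k' = y) ∨ (σ k = y ∧ σ k' = x)) → σ * Equiv.swap k k' ∈ Ps) :
    ∑ σ ∈ Ps, ascProd t f σ = ∑ σ ∈ Ps, ascProd t (swapf f x y) σ := by
  classical
  set F : Equiv.Perm (Fin n) → Equiv.Perm (Fin n) := fun σ =>
    if (σ.symm x).val + 1 = (σ.symm y).val ∨ (σ.symm y).val + 1 = (σ.symm x).val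
    then σ * Equiv.swap (σ.symm x) (σ.symm y) else σ with hF
  have hF_adj : ∀ σ, ((σ.symm x).val + 1 = (σ.symm y).val ∨ (σ.symm y).val + 1 = (σ.symm x).val) →
      F σ = σ * Equiv.swap (σ.symm x) (σ.symm y) := by
    intro σ h; rw [hF]; exact if_pos h
  have hF_nadj : ∀ σ, ¬((σ.symm x).val + 1 = (σ.symm y).val ∨ (σ.symm y).val + 1 = (σ.symm x).val) →
      F σ = σ := by
    intro σ h; rw [hF]; exact if_neg h
  have hmem : ∀ σ ∈ Ps, F σ ∈ Ps := by
    intro σ hσ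
    by_cases hadj : (σ.symm x).val + 1 = (σ.symm y).val ∨ (σ.symm y).val + 1 = (σ.symm x).val
    · rw [hF_adj σ hadj]
      rcases hadj with h | h
      · exact hswap σ hσ _ _ h
          (Or.inl ⟨Equiv.apply_symm_apply σ x, Equiv.apply_symm_apply σ y⟩)
      · have := hswap σ hσ _ _ h
          (Or.inr ⟨Equiv.apply_symm_apply σ y, Equiv.apply_symm_apply σ x⟩)
        rwa [Equiv.swap_comm (σ.symm y) (σ.symm x)] at this
    · rw [hF_nadj σ hadj]; exact hσ
  have hsymmF : ∀ σ, ((σ.symm x).val + 1 = (σ.symm y).val ∨ (σ.symm y).val + 1 = (σ.symm x).val) →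
      (F σ).symm x = σ.symm y ∧ (F σ).symm y = σ.symm x := by
    intro σ hadj
    rw [hF_adj σ hadj]
    constructor
    · rw [mul_swap_symm_apply, Equiv.swap_apply_left]
    · rw [mul_swap_symm_apply, Equiv.swap_apply_right]
  have hinv : ∀ σ, F (F σ) = σ := by
    intro σ
    by_cases hadj : (σ.symm x).val + 1 = (σ.symm y).val ∨ (σ.symm y).val + 1 = (σ.symm x).val
    · obtain ⟨e1, e2⟩ := hsymmF σ hadj
      have hadj2 : ((F σ).symm x).val + 1 = ((F σ).symm y).val ∨
          ((F σ).symm y).val + 1 = ((F σ).symm x).val := by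
        rw [e1, e2]; exact hadj.symm
      rw [hF_adj _ hadj2, e1, e2, hF_adj σ hadj, Equiv.swap_comm (σ.symm y) (σ.symm x),
        mul_assoc, Equiv.swap_mul_self, mul_one]
    · rw [hF_nadj σ hadj, hF_nadj σ hadj]
  have hval : ∀ σ ∈ Ps, ascProd t f σ = ascProd t (swapf f x y) (F σ) := by
    intro σ _
    by_cases hadj : (σ.symm x).val + 1 = (σ.symm y).val ∨ (σ.symm y).val + 1 = (σ.symm x).val
    · rw [hF_adj σ hadj]
      rcases hadj with h | h
      · exact (asc_swap_helper t hxy σ x y (Or.inl ⟨rfl, rfl⟩) _ _ rfl rfl h).symm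
      · rw [Equiv.swap_comm (σ.symm x) (σ.symm y)]
        exact (asc_swap_helper t hxy σ y x (Or.inr ⟨rfl, rfl⟩) _ _ rfl rfl h).symm
    · rw [hF_nadj σ hadj]
      unfold ascProd
      refine Finset.prod_congr rfl (fun k _ => ?_)
      set k0 : Fin n := ⟨k.val, flt1 k⟩
      set k1 : Fin n := ⟨k.val + 1, flt2 k⟩
      have h1 : ¬(σ k0 = x ∧ σ k1 = y) := by
        rintro ⟨hh1, hh2⟩
        exact hadj (Or.inl (by
          rw [← hh1, ← hh2, Equiv.symm_apply_apply, Equiv.symm_apply_apply]))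
      have h2 : ¬(σ k0 = y ∧ σ k1 = x) := by
        rintro ⟨hh1, hh2⟩
        exact hadj (Or.inr (by
          rw [← hh1, ← hh2, Equiv.symm_apply_apply, Equiv.symm_apply_apply]))
      exact if_congr (Lcomp hf hxy hcons (σ k0) (σ k1) h1 h2).symm rfl rfl
  exact Finset.sum_nbij' F F hmem hmem (fun σ _ => hinv σ) (fun σ _ => hinv σ) hval

/-- disagreement count between two labelings. -/
noncomputable def dis (f g : Fin n → ℤ) : ℕ :=
  ((Finset.univ : Finset (Fin n × Fin n)).filter
    (fun p => f p.1 < f p.2 ∧ g p.2 < g p.1)).card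

lemma dis_zero_agree {f g : Fin n → ℤ} (hf : Function.Injective f) (hg : Function.Injective g)
    (h : dis f g = 0) : ∀ u v, f u < f v ↔ g u < g v := by
  have hnone : ∀ u v : Fin n, ¬(f u < f v ∧ g v < g u) := by
    intro u v hc
    have : (u, v) ∈ (Finset.univ : Finset (Fin n × Fin n)).filter
        (fun p => f p.1 < f p.2 ∧ g p.2 < g p.1) := by
      simp [hc.1, hc.2]
    rw [Finset.card_eq_zero.mp h] at this
    exact absurd this (Finset.notMem_empty _)
  intro u v
  constructor
  · intro huv
    have hne : u ≠ v := fun hh => by rw [hh] at huv; omega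
    have := hnone u v
    have hgne : g u ≠ g v := fun hh => hne (hg hh)
    omega
  · intro huv
    have hne : u ≠ v := fun hh => by rw [hh] at huv; omega
    have := hnone v u
    have hfne : f u ≠ f v := fun hh => hne (hf hh)
    have := hnone u v
    omega

/-- The abstract swap lemma. -/
lemma abstract_swap (Ps : Finset (Equiv.Perm (Fin n))) (t : Fin (n-1) → M)
    (g : Fin n → ℤ) (hg : Function.Injective g) :
    ∀ d, ∀ f : Fin n → ℤ, Function.Injective f →
    (∀ σ ∈ Ps, ∀ k k' : Fin n, k.val + 1 = k'.val →
      ¬((f (σ k) < f (σ k')) ↔ (g (σ k) < g (σ k'))) → σ * Equiv.swap k k' ∈ Ps) →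
    dis f g ≤ d →
    ∑ σ ∈ Ps, ascProd t f σ = ∑ σ ∈ Ps, ascProd t g σ := by
  intro d
  induction d with
  | zero =>
    intro f hf H1 hd
    have hagree := dis_zero_agree hf hg (Nat.le_zero.mp hd)
    refine Finset.sum_congr rfl (fun σ _ => ?_)
    unfold ascProd
    exact Finset.prod_congr rfl (fun k _ => if_congr (hagree _ _) rfl rfl)
  | succ d ih =>
    intro f hf H1 hd
    by_cases h0 : dis f g = 0
    · have hagree := dis_zero_agree hf hg h0
      refine Finset.sum_congr rfl (fun σ _ => ?_)
      unfold ascProd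
      exact Finset.prod_congr rfl (fun k _ => if_congr (hagree _ _) rfl rfl)
    · -- pick a minimal-gap disagreeing pair
      set T := ((Finset.univ : Finset (Fin n × Fin n)).filter
        (fun p => f p.1 < f p.2 ∧ g p.2 < g p.1)) with hT
      have hTne : T.Nonempty := by
        rw [← Finset.card_pos]
        have hcard : T.card = dis f g := by rw [hT]; rfl
        omega
      obtain ⟨pr, hprT, hprmin⟩ := Finset.exists_min_image T (fun p => f p.2 - f p.1) hTne
      set x := pr.1 with hx
      set y := pr.2 with hy
      have hprT' := Finset.mem_filter.mp hprT
      have hxy : f x < f y := hprT'.2.1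
      have hgyx : g y < g x := hprT'.2.2
      have hcons : ∀ z, ¬(f x < f z ∧ f z < f y) := by
        rintro z ⟨hz1, hz2⟩
        have hzx : z ≠ x := fun hh => by rw [hh] at hz1; omega
        have hzy : z ≠ y := fun hh => by rw [hh] at hz2; omega
        rcases lt_or_gt_of_ne (fun hh : g z = g x => hzx (hg hh)) with hc | hc
        · have hmemzT : (x, z) ∈ T := by
            rw [hT]; simp only [Finset.mem_filter, Finset.mem_univ, true_and]
            exact ⟨hz1, hc⟩
          have h5 : f y - f x ≤ f z - f x := hprmin (x, z) hmemzT
          omega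
        · have hmemzT : (z, y) ∈ T := by
            rw [hT]; simp only [Finset.mem_filter, Finset.mem_univ, true_and]
            exact ⟨hz2, by omega⟩
          have h5 : f y - f x ≤ f y - f z := hprmin (z, y) hmemzT
          omega
      -- swap the labels of x and y
      have hstep : ∑ σ ∈ Ps, ascProd t f σ = ∑ σ ∈ Ps, ascProd t (swapf f x y) σ := by
        refine step_bij Ps t hf hxy hcons ?_
        intro σ hσ k k' hkk' hor
        refine H1 σ hσ k k' hkk' ?_
        rcases hor with ⟨h1, h2⟩ | ⟨h1, h2⟩
        · rw [h1, h2]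
          intro hiff
          have := hiff.mp hxy
          omega
        · rw [h1, h2]
          intro hiff
          have hfyx : ¬ (f y < f x) := by omega
          have := hiff.mpr (by omega)
          omega
      rw [hstep]
      -- apply the inductive hypothesis to the swapped labeling
      have hne := hxy_ne hxy
      have hf' := swapf_inj (x := x) (y := y) hf
      have hLc := Lcomp hf hxy hcons
      have hother_pair : ∀ u v : Fin n, ¬(u = x ∧ v = y) → ¬(u = y ∧ v = x) →
          (swapf f x y u < swapf f x y v ↔ f u < f v) := hLc
      refine ih (swapf f x y) hf' ?_ ?_
      · -- closure hypothesis for the swapped labeling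
        intro σ hσ k k' hkk' hdis
        refine H1 σ hσ k k' hkk' ?_
        intro hiff
        apply hdis
        by_cases h1 : σ k = x ∧ σ k' = y
        · rw [h1.1, h1.2] at hiff ⊢
          rw [swapf_x hne, swapf_y hne]
          constructor
          · intro hcc; omega
          · intro hcc
            exact absurd (hiff.mpr hcc) (by omega)
        · by_cases h2 : σ k = y ∧ σ k' = x
          · rw [h2.1, h2.2] at hiff ⊢
            rw [swapf_x hne, swapf_y hne]
            constructor
            · intro hcc; omega
            · intro hcc
              have : f y < f x := hiff.mpr hcc
              omega
          · rw [hother_pair _ _ h1 h2]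
            exact hiff
      · -- the disagreement count strictly decreased
        have hsub : ((Finset.univ : Finset (Fin n × Fin n)).filter
            (fun p => swapf f x y p.1 < swapf f x y p.2 ∧ g p.2 < g p.1)) ⊂ T := by
          constructor
          · intro q hq
            rw [Finset.mem_filter] at hq
            rw [hT, Finset.mem_filter]
            refine ⟨Finset.mem_univ _, ?_, hq.2.2⟩
            by_cases h1 : q.1 = x ∧ q.2 = y
            · rw [h1.1, h1.2, swapf_x hne, swapf_y hne] at hq
              omega
            · by_cases h2 : q.1 = y ∧ q.2 = x
              · rw [h2.1, h2.2] at hq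
                have := hq.2.2
                omega
              · exact (hother_pair _ _ h1 h2).mp hq.2.1
          · intro hcon
            have hxyT : (x, y) ∈ T := hprT
            have := hcon hxyT
            rw [Finset.mem_filter] at this
            have h2 := this.2
            simp only at h2
            rw [swapf_x hne, swapf_y hne] at h2
            omega
        have hcard := Finset.card_lt_card hsub
        have hdT : dis f g = T.card := by rw [hT]; rfl
        have hdT2 : dis (swapf f x y) g = ((Finset.univ : Finset (Fin n × Fin n)).filter
            (fun p => swapf f x y p.1 < swapf f x y p.2 ∧ g p.2 < g p.1)).card := rfl
        omega

end Abstract3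


section Assembly

variable {n : ℕ} {w : Equiv.Perm (Fin (n+1))}

/-- the signed value killed at bar `b` during the run of `(w, σ)`. -/
noncomputable def mu (n : ℕ) (w : Equiv.Perm (Fin (n+1))) (σ : Equiv.Perm (Fin n)) :
    Fin n → ℤ := fun b => lam n w σ (σ.symm b)

lemma lam_eq_mu (σ : Equiv.Perm (Fin n)) (i : Fin n) : lam n w σ i = mu n w σ (σ i) := by
  unfold mu
  rw [Equiv.symm_apply_apply]

lemma mu_inj (σ : Equiv.Perm (Fin n)) : Function.Injective (mu n w σ) := by
  intro b b' h
  by_contra hne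
  exact lam_inj (w := w) (fun hh : σ.symm b = σ.symm b' => hne (σ.symm.injective hh)) h

section swapfacts

variable (σ : Equiv.Perm (Fin n)) (k k' : Fin n)

lemma sset_succ (hkk' : k.val + 1 = k'.val) : Sset σ k' = insert (σ k) (Sset σ k) := by
  ext j
  simp only [Sset, Set.mem_setOf_eq, Set.mem_insert_iff]
  constructor
  · intro h
    rw [Fin.lt_def] at h
    by_cases hh : (σ.symm j).val < k.val
    · exact Or.inr (Fin.lt_def.mpr hh)
    · have : σ.symm j = k := Fin.ext (by omega)
      exact Or.inl (by rw [← this, Equiv.apply_symm_apply])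
  · rintro (h | h)
    · rw [h, Equiv.symm_apply_apply, Fin.lt_def]
      omega
    · rw [Fin.lt_def] at h ⊢
      omega

lemma sset_swap_other (hkk' : k.val + 1 = k'.val) (i : Fin n) (hik' : i ≠ k') :
    Sset (σ * Equiv.swap k k') i = Sset σ i := by
  have hik'v : i.val ≠ k'.val := Fin.val_ne_of_ne hik'
  ext j
  simp only [Sset, Set.mem_setOf_eq]
  rw [mul_swap_symm_apply, Fin.lt_def, Fin.lt_def]
  rcases eq_or_ne (σ.symm j) k with h | h
  · rw [h, Equiv.swap_apply_left]
    omega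
  · rcases eq_or_ne (σ.symm j) k' with h2 | h2
    · rw [h2, Equiv.swap_apply_right]
      omega
    · rw [Equiv.swap_apply_of_ne_of_ne h h2]

lemma sset_swap_succ (hkk' : k.val + 1 = k'.val) : Sset (σ * Equiv.swap k k') k' = insert (σ k') (Sset σ k) := by
  ext j
  simp only [Sset, Set.mem_setOf_eq, Set.mem_insert_iff]
  rw [mul_swap_symm_apply, Fin.lt_def]
  rcases eq_or_ne (σ.symm j) k with h | h
  · rw [h, Equiv.swap_apply_left]
    constructor
    · intro hh; omega
    · rintro (hh | hh)
      · exfalso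
        have : σ.symm j = k' := by rw [hh, Equiv.symm_apply_apply]
        rw [h] at this
        exact absurd (congrArg Fin.val this) (by omega)
      · rw [Fin.lt_def] at hh
        have := congrArg Fin.val h
        omega
  · rcases eq_or_ne (σ.symm j) k' with h2 | h2
    · rw [h2, Equiv.swap_apply_right]
      constructor
      · intro _
        exact Or.inl (by rw [← h2, Equiv.apply_symm_apply])
      · intro _
        omega
    · rw [Equiv.swap_apply_of_ne_of_ne h h2]
      have hv := Fin.val_ne_of_ne h
      have hv2 := Fin.val_ne_of_ne h2
      constructor
      · intro hh
        exact Or.inr (Fin.lt_def.mpr (by omega))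
      · rintro (hh | hh)
        · exfalso
          apply h2
          rw [hh, Equiv.symm_apply_apply]
        · rw [Fin.lt_def] at hh
          omega

lemma swap_apply_k : (σ * Equiv.swap k k') k = σ k' := by
  rw [mul_swap_apply, Equiv.swap_apply_left]

lemma swap_apply_k' : (σ * Equiv.swap k k') k' = σ k := by
  rw [mul_swap_apply, Equiv.swap_apply_right]

end swapfacts

lemma mu_swap_eq (σ : Equiv.Perm (Fin n)) (k k' : Fin n) (hkk' : k.val + 1 = k'.val)
    (hdv : dv n w (Sset σ k) (σ k) = dv n w (insert (σ k') (Sset σ k)) (σ k) ∧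
      dv n w (insert (σ k) (Sset σ k)) (σ k') = dv n w (Sset σ k) (σ k')) :
    mu n w (σ * Equiv.swap k k') = mu n w σ := by
  have hkk : k ≠ k' := Fin.ne_of_val_ne (by omega)
  funext c
  set σ' := σ * Equiv.swap k k' with hσ'
  have hsymm : ∀ c, σ'.symm c = Equiv.swap k k' (σ.symm c) := fun c => mul_swap_symm_apply σ k k' c
  by_cases hc1 : c = σ k
  · have h1 : σ'.symm c = k' := by
      rw [hsymm, hc1, Equiv.symm_apply_apply, Equiv.swap_apply_left]
    unfold mu
    rw [h1, hc1, Equiv.symm_apply_apply, lam_eq]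
    rw [lam_eq]
    rw [sset_swap_succ σ k k' hkk', swap_apply_k' σ k k']
    exact hdv.1.symm
  · by_cases hc2 : c = σ k'
    · have h1 : σ'.symm c = k := by
        rw [hsymm, hc2, Equiv.symm_apply_apply, Equiv.swap_apply_right]
      unfold mu
      rw [h1, hc2, Equiv.symm_apply_apply, lam_eq, lam_eq]
      rw [sset_swap_other σ k k' hkk' k (Fin.ne_of_val_ne (by omega)), swap_apply_k σ k k',
        sset_succ σ k k' hkk']
      exact hdv.2.symm
    · have hik : σ.symm c ≠ k := fun h => hc1 (by rw [← Equiv.apply_symm_apply σ c, h])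
      have hik' : σ.symm c ≠ k' := fun h => hc2 (by rw [← Equiv.apply_symm_apply σ c, h])
      have h1 : σ'.symm c = σ.symm c := by
        rw [hsymm, Equiv.swap_apply_of_ne_of_ne hik hik']
      unfold mu
      rw [h1, lam_eq, lam_eq]
      have h2 : σ' (σ.symm c) = σ (σ.symm c) := by
        rw [hσ', mul_swap_apply, Equiv.swap_apply_of_ne_of_ne hik hik']
      rw [sset_swap_other σ k k' hkk' _ hik', h2]

lemma mu_heart (σ : Equiv.Perm (Fin n)) (k k' : Fin n) (hkk' : k.val + 1 = k'.val)
    (hdis : ¬((mu n w σ (σ k) < mu n w σ (σ k')) ↔ ((σ k').val < (σ k).val))) :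
    mu n w (σ * Equiv.swap k k') = mu n w σ := by
  have hkk : k ≠ k' := Fin.ne_of_val_ne (by omega)
  have hne : σ k ≠ σ k' := fun h => hkk (σ.injective h)
  have hb : σ k ∉ Sset σ k := self_notMem_Sset k
  have hb' : σ k' ∉ Sset σ k := by
    simp only [Sset, Set.mem_setOf_eq, Equiv.symm_apply_apply, Fin.lt_def]
    omega
  rcases heart (w := w) (Sset σ k) (σ k) (σ k') hne hb hb' with h | h
  · exact mu_swap_eq σ k k' hkk' h
  · exfalso
    apply hdis
    rw [← lam_eq_mu σ k, ← lam_eq_mu σ k', lam_eq, lam_eq, sset_succ σ k k' hkk']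
    rw [Fin.lt_def] at h
    exact h

end Assembly


section Final

open MvPolynomial

variable {n : ℕ} {w : Equiv.Perm (Fin (n+1))}

noncomputable def tvar (n : ℕ) : Fin (n-1) → MvPolynomial (Fin n ⊕ Fin (n-1)) ℤ :=
  fun k => X (Sum.inr k)

noncomputable def gneg (n : ℕ) : Fin n → ℤ := fun b => -(b.val : ℤ)

lemma gneg_inj : Function.Injective (gneg n) := by
  intro a b h
  unfold gneg at h
  exact Fin.ext (by omega)

lemma gneg_lt (b b' : Fin n) : gneg n b < gneg n b' ↔ (b').val < b.val := by
  unfold gneg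
  omega

noncomputable def Ym (n : ℕ) (m : Fin n → ℤ) : MvPolynomial (Fin n ⊕ Fin (n-1)) ℤ :=
  ∏ v : Fin n, if ∃ b : Fin n, m b = (v.val : ℤ) + 2 then X (Sum.inl v) else 1

lemma tAsc_eq (σ : Equiv.Perm (Fin n)) (m : Fin n → ℤ) (hm : mu n w σ = m) :
    tAsc n w σ = ascProd (tvar n) m σ := by
  unfold tAsc ascProd tvar
  refine Finset.prod_congr rfl (fun k _ => ?_)
  rw [← hm]
  simp only [lam_eq_mu σ]

lemma tDes_eq (σ : Equiv.Perm (Fin n)) : tDes n σ = ascProd (tvar n) (gneg n) σ := by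
  unfold tDes ascProd tvar
  refine Finset.prod_congr rfl (fun k _ => ?_)
  refine if_congr ?_ rfl rfl
  rw [gneg_lt, Fin.lt_def]

lemma yIno_eq (σ : Equiv.Perm (Fin n)) (m : Fin n → ℤ) (hm : mu n w σ = m) :
    yIno n w σ = Ym n m := by
  unfold yIno Ym
  refine Finset.prod_congr rfl (fun v _ => ?_)
  refine if_congr ?_ rfl rfl
  rw [← hm]
  constructor
  · rintro ⟨i, hi⟩
    exact ⟨σ i, by rwa [← lam_eq_mu]⟩
  · rintro ⟨b, hb⟩
    exact ⟨σ.symm b, hb⟩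

theorem final :
    (∑ σ : Equiv.Perm (Fin n), yIno n w σ * tAsc n w σ)
      = ∑ σ : Equiv.Perm (Fin n), yIno n w σ * tDes n σ := by
  classical
  have hmaps : ∀ σ ∈ (Finset.univ : Finset (Equiv.Perm (Fin n))),
      mu n w σ ∈ Finset.univ.image (mu n w) :=
    fun σ hσ => Finset.mem_image_of_mem _ hσ
  rw [← Finset.sum_fiberwise_of_maps_to hmaps (fun σ => yIno n w σ * tAsc n w σ),
    ← Finset.sum_fiberwise_of_maps_to hmaps (fun σ => yIno n w σ * tDes n σ)]
  refine Finset.sum_congr rfl (fun m hm => ?_)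
  obtain ⟨σ₀, _, hσ₀⟩ := Finset.mem_image.mp hm
  have hminj : Function.Injective m := hσ₀ ▸ mu_inj σ₀
  have hL : ∀ σ ∈ Finset.univ.filter (fun σ => mu n w σ = m),
      yIno n w σ * tAsc n w σ = Ym n m * ascProd (tvar n) m σ := by
    intro σ hσ
    have hσm : mu n w σ = m := (Finset.mem_filter.mp hσ).2
    rw [yIno_eq σ m hσm, tAsc_eq σ m hσm]
  have hR : ∀ σ ∈ Finset.univ.filter (fun σ => mu n w σ = m),
      yIno n w σ * tDes n σ = Ym n m * ascProd (tvar n) (gneg n) σ := by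
    intro σ hσ
    have hσm : mu n w σ = m := (Finset.mem_filter.mp hσ).2
    rw [yIno_eq σ m hσm, tDes_eq σ]
  rw [Finset.sum_congr rfl hL, Finset.sum_congr rfl hR, ← Finset.mul_sum, ← Finset.mul_sum]
  congr 1
  refine abstract_swap _ (tvar n) (gneg n) gneg_inj (dis m (gneg n)) m hminj ?_ le_rfl
  intro σ hσ k k' hkk' hdis
  have hσm : mu n w σ = m := (Finset.mem_filter.mp hσ).2
  rw [Finset.mem_filter]
  refine ⟨Finset.mem_univ _, ?_⟩
  rw [← hσm]
  apply mu_heart σ k k' hkk'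
  rw [hσm, ← gneg_lt (σ k) (σ k')]
  exact hdis

end Final

end InoAux


/-- For fixed `w ∈ S_{n+1}`,
`Σ_{σ} 𝐲^{Ino(w,σ)} 𝐭^{Asc(λ(w,σ))} = Σ_{σ} 𝐲^{Ino(w,σ)} 𝐭^{Des(σ)}`
in `ℤ[y_2,…,y_{n+1},t_1,…,t_{n−1}]`. -/
theorem Ino_Asc_eq_Ino_Des (n : ℕ) (hn : 1 ≤ n) (w : Equiv.Perm (Fin (n+1))) :
    ∑ σ : Equiv.Perm (Fin n), yIno n w σ * tAsc n w σ
      = ∑ σ : Equiv.Perm (Fin n), yIno n w σ * tDes n σ := by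
  exact InoAux.final
end

section
/- Let n ≥ 1, w ∈ S_{n+1}, σ ∈ Sym(n), and λ(w,σ) = (λ_1,…,λ_n). Then {|λ_1|,…,|λ_n|} = {2,…,n+1}; equivalently, the map i ↦ |λ_i| is a bijection from {1,…,n} onto {2,…,n+1}. In particular, the value 1 never occurs as |λ_i|, and every value of {2,…,n+1} occurs exactly once. -/
open scoped Classical

namespace AbsLamAux

variable {n : ℕ}

def Rel (σ : Equiv.Perm (Fin n)) (t : ℕ) (p q : Fin (n+1)) : Prop :=
  ∀ j : Fin n, min p.val q.val ≤ j.val → j.val < max p.val q.val → (σ.symm j).val < t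

lemma Rel.refl (σ : Equiv.Perm (Fin n)) (t : ℕ) (p : Fin (n+1)) : Rel σ t p p := by
  intro j h1 h2; omega

lemma Rel.symm' {σ : Equiv.Perm (Fin n)} {t p q} (h : Rel σ t p q) : Rel σ t q p := by
  intro j h1 h2; exact h j (by omega) (by omega)

lemma Rel.trans' {σ : Equiv.Perm (Fin n)} {t} {p q r : Fin (n+1)}
    (h1 : Rel σ t p q) (h2 : Rel σ t q r) : Rel σ t p r := by
  intro j ha hb
  rcases le_or_gt q.val j.val with h | h
  · rcases lt_or_ge j.val p.val with h' | h'
    · exact h1 j (by omega) (by omega)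
    · exact h2 j (by omega) (by omega)
  · rcases le_or_gt p.val j.val with h' | h'
    · exact h1 j (by omega) (by omega)
    · exact h2 j (by omega) (by omega)

lemma Rel.mono {σ : Equiv.Perm (Fin n)} {t t'} (ht : t ≤ t') {p q} (h : Rel σ t p q) :
    Rel σ t' p q := fun j a b => lt_of_lt_of_le (h j a b) ht

noncomputable def bmin (w : Equiv.Perm (Fin (n+1))) (σ : Equiv.Perm (Fin n)) (t : ℕ)
    (p : Fin (n+1)) : ℕ :=
  sInf {v | ∃ q, Rel σ t p q ∧ v = (w q).val + 1}

lemma bmin_mem (w : Equiv.Perm (Fin (n+1))) (σ : Equiv.Perm (Fin n)) (t : ℕ) (p : Fin (n+1)) :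
    ∃ q, Rel σ t p q ∧ bmin w σ t p = (w q).val + 1 :=
  Nat.sInf_mem (⟨(w p).val + 1, p, Rel.refl σ t p, rfl⟩ :
    Set.Nonempty {v | ∃ q, Rel σ t p q ∧ v = (w q).val + 1})

lemma bmin_le {w : Equiv.Perm (Fin (n+1))} {σ : Equiv.Perm (Fin n)} {t : ℕ} {p q : Fin (n+1)}
    (h : Rel σ t p q) : bmin w σ t p ≤ (w q).val + 1 :=
  Nat.sInf_le ⟨q, h, rfl⟩

lemma bmin_congr {w : Equiv.Perm (Fin (n+1))} {σ : Equiv.Perm (Fin n)} {t : ℕ} {p q : Fin (n+1)}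
    (h : Rel σ t p q) : bmin w σ t p = bmin w σ t q := by
  apply le_antisymm
  · obtain ⟨r, hr, he⟩ := bmin_mem w σ t q
    rw [he]; exact bmin_le (h.trans' hr)
  · obtain ⟨r, hr, he⟩ := bmin_mem w σ t p
    rw [he]; exact bmin_le (h.symm'.trans' hr)

lemma bmin_mono {w : Equiv.Perm (Fin (n+1))} {σ : Equiv.Perm (Fin n)} {t t' : ℕ} (ht : t ≤ t')
    (p : Fin (n+1)) : bmin w σ t' p ≤ bmin w σ t p := by
  obtain ⟨r, hr, he⟩ := bmin_mem w σ t p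
  rw [he]; exact bmin_le (hr.mono ht)

variable (w : Equiv.Perm (Fin (n+1))) (σ : Equiv.Perm (Fin n)) (i : Fin n)

lemma minL_eq : minL n w σ i = bmin w σ i.val (σ i).castSucc := by
  have hc : ((σ i).castSucc).val = (σ i).val := rfl
  unfold minL bmin
  congr 1
  ext v
  constructor
  · rintro ⟨p, hp1, hp2, rfl⟩
    refine ⟨p, fun j h1 h2 => ?_, rfl⟩
    exact Fin.lt_def.mp (hp2 j (by omega) (by omega))
  · rintro ⟨q, hq, rfl⟩
    have hle : q.val ≤ (σ i).val := by
      by_contra h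
      push_neg at h
      have := hq (σ i) (by omega) (by omega)
      simp at this
    refine ⟨q, hle, fun j h1 h2 => ?_, rfl⟩
    rw [Fin.lt_def]
    exact hq j (by omega) (by omega)

lemma minR_eq : minR n w σ i = bmin w σ i.val (σ i).succ := by
  have hc : ((σ i).succ).val = (σ i).val + 1 := rfl
  unfold minR bmin
  congr 1
  ext v
  constructor
  · rintro ⟨q, hq1, hq2, rfl⟩
    refine ⟨q, fun j h1 h2 => ?_, rfl⟩
    exact Fin.lt_def.mp (hq2 j (by omega) (by omega))
  · rintro ⟨q, hq, rfl⟩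
    have hle : (σ i).val < q.val := by
      by_contra h
      push_neg at h
      have := hq (σ i) (by omega) (by omega)
      simp at this
    refine ⟨q, hle, fun j h1 h2 => ?_, rfl⟩
    rw [Fin.lt_def]
    exact hq j (by omega) (by omega)

lemma rel_merge : Rel σ (i.val + 1) (σ i).castSucc (σ i).succ := by
  intro j h1 h2
  have hc : ((σ i).castSucc).val = (σ i).val := rfl
  have hs : ((σ i).succ).val = (σ i).val + 1 := rfl
  have hj : j = σ i := Fin.ext (by omega)
  subst hj
  simp

end AbsLamAux

namespace AbsLamAux
variable {n : ℕ} (w : Equiv.Perm (Fin (n+1))) (σ : Equiv.Perm (Fin n)) (i : Fin n)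

lemma minL_witness : ∃ p : Fin (n+1), p.val ≤ (σ i).val ∧ minL n w σ i = (w p).val + 1 := by
  rw [minL_eq]
  obtain ⟨q, hq, he⟩ := bmin_mem w σ i.val (σ i).castSucc
  have hc : ((σ i).castSucc).val = (σ i).val := rfl
  have hle : q.val ≤ (σ i).val := by
    by_contra h
    push_neg at h
    have := hq (σ i) (by omega) (by omega)
    simp at this
  exact ⟨q, hle, he⟩

lemma minR_witness : ∃ q : Fin (n+1), (σ i).val < q.val ∧ minR n w σ i = (w q).val + 1 := by
  rw [minR_eq]
  obtain ⟨q, hq, he⟩ := bmin_mem w σ i.val (σ i).succ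
  have hc : ((σ i).succ).val = (σ i).val + 1 := rfl
  have hle : (σ i).val < q.val := by
    by_contra h
    push_neg at h
    have := hq (σ i) (by omega) (by omega)
    simp at this
  exact ⟨q, hle, he⟩

lemma minL_ne_minR : minL n w σ i ≠ minR n w σ i := by
  obtain ⟨p, hp, hep⟩ := minL_witness w σ i
  obtain ⟨q, hq, heq⟩ := minR_witness w σ i
  intro h
  rw [hep, heq] at h
  have : p = q := w.injective (Fin.ext (by omega))
  omega

lemma one_le_minL : 1 ≤ minL n w σ i ∧ minL n w σ i ≤ n + 1 := by
  obtain ⟨p, _, hep⟩ := minL_witness w σ i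
  have := (w p).isLt
  omega

lemma one_le_minR : 1 ≤ minR n w σ i ∧ minR n w σ i ≤ n + 1 := by
  obtain ⟨p, _, hep⟩ := minR_witness w σ i
  have := (w p).isLt
  omega

lemma natAbs_lam : (lam n w σ i).natAbs = max (minL n w σ i) (minR n w σ i) := by
  unfold lam
  split <;> simp [← Nat.cast_max]

/-- Witness of the larger of the two merged minima. -/
lemma max_witness : ∃ q : Fin (n+1),
    max (minL n w σ i) (minR n w σ i) = (w q).val + 1 ∧
    Rel σ (i.val + 1) (σ i).castSucc q ∧
    bmin w σ i.val q = max (minL n w σ i) (minR n w σ i) := by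
  rcases le_total (minL n w σ i) (minR n w σ i) with h | h
  · obtain ⟨q, hq, he⟩ := bmin_mem w σ i.val (σ i).succ
    rw [max_eq_right h, minR_eq]
    exact ⟨q, he, (rel_merge σ i).trans' (hq.mono (Nat.le_succ _)),
      (bmin_congr hq).symm⟩
  · obtain ⟨q, hq, he⟩ := bmin_mem w σ i.val (σ i).castSucc
    rw [max_eq_left h, minL_eq]
    exact ⟨q, he, hq.mono (Nat.le_succ _), (bmin_congr hq).symm⟩

lemma bmin_merged_le :
    bmin w σ (i.val + 1) (σ i).castSucc ≤ min (minL n w σ i) (minR n w σ i) := by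
  have h1 : bmin w σ (i.val + 1) (σ i).castSucc ≤ minL n w σ i := by
    rw [minL_eq]; exact bmin_mono (Nat.le_succ _) _
  have h2 : bmin w σ (i.val + 1) (σ i).castSucc ≤ minR n w σ i := by
    rw [minR_eq, bmin_congr (rel_merge σ i)]
    exact bmin_mono (Nat.le_succ _) _
  omega

lemma key {i i' : Fin n} (h : i < i') :
    max (minL n w σ i) (minR n w σ i) ≠ max (minL n w σ i') (minR n w σ i') := by
  intro heq
  obtain ⟨q, hq1, hq2, hq3⟩ := max_witness w σ i
  obtain ⟨q', hq1', hq2', hq3'⟩ := max_witness w σ i'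
  have hqq : q = q' := w.injective (Fin.ext (by omega))
  subst hqq
  have hii : i.val + 1 ≤ i'.val := h
  -- q is related to the merged block center at time i'
  have hrel : Rel σ i'.val (σ i).castSucc q := hq2.mono hii
  have h1 : bmin w σ i'.val q ≤ min (minL n w σ i) (minR n w σ i) :=
    le_trans (le_of_eq (bmin_congr hrel.symm')) <|
      le_trans (bmin_mono hii _) (bmin_merged_le w σ i)
  have h2 : min (minL n w σ i) (minR n w σ i) < max (minL n w σ i) (minR n w σ i) :=
    min_lt_max.mpr (minL_ne_minR w σ i)
  omega

end AbsLamAux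


/-- `{|λ_1|,…,|λ_n|} = {2,…,n+1}`, and `i ↦ |λ_i|` is injective, i.e. it is a
bijection from `{1,…,n}` onto `{2,…,n+1}`: the value `1` never occurs and every value of
`{2,…,n+1}` occurs exactly once. -/
theorem abs_lam_bijection (n : ℕ) (hn : 1 ≤ n)
    (w : Equiv.Perm (Fin (n+1))) (σ : Equiv.Perm (Fin n)) :
    (Finset.univ.image fun i : Fin n => (lam n w σ i).natAbs) = Finset.Icc 2 (n+1)
      ∧ Function.Injective fun i : Fin n => (lam n w σ i).natAbs := by
  open AbsLamAux in
  have hinj : Function.Injective fun i : Fin n => (lam n w σ i).natAbs := by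
    intro i i' h
    simp only [natAbs_lam] at h
    rcases lt_trichotomy i i' with hlt | heq | hlt
    · exact absurd h (key w σ hlt)
    · exact heq
    · exact absurd h.symm (key w σ hlt)
  refine ⟨?_, hinj⟩
  have hsub : (Finset.univ.image fun i : Fin n => (lam n w σ i).natAbs) ⊆ Finset.Icc 2 (n+1) := by
    intro v hv
    simp only [Finset.mem_image, Finset.mem_univ, true_and] at hv
    obtain ⟨i, rfl⟩ := hv
    rw [natAbs_lam, Finset.mem_Icc]
    have h1 := one_le_minL w σ i
    have h2 := one_le_minR w σ i
    have h3 : min (minL n w σ i) (minR n w σ i) < max (minL n w σ i) (minR n w σ i) :=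
      min_lt_max.mpr (minL_ne_minR w σ i)
    omega
  apply Finset.eq_of_subset_of_card_le hsub
  rw [Nat.card_Icc, Finset.card_image_of_injective _ hinj]
  simp
end

section
/- Let n ≥ 1, w ∈ S_{n+1}, σ ∈ Sym(n), λ(w,σ) = (λ_1,…,λ_n), and let i ∈ {1,…,n+1} be a position with w_i ≥ 2. (1) If w_i is neither a left-to-right minimum nor a right-to-left minimum of w, then ℓ_σ ≠ r_σ, and λ_{ℓ_σ} = w_i if ℓ_σ < r_σ, while λ_{r_σ} = −w_i if r_σ < ℓ_σ. (2) If w_i is a right-to-left minimum but not a left-to-right minimum, then λ_{ℓ_σ} = w_i. (3) If w_i is a left-to-right minimum but not a right-to-left minimum, then λ_{r_σ} = −w_i. -/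
open scoped Classical

/-- `w_i` is a left-to-right minimum of `w`. -/
def IsLtrMin (n : ℕ) (w : Equiv.Perm (Fin (n+1))) (i : Fin (n+1)) : Prop :=
  ∀ j : Fin (n+1), j < i → w i < w j

/-- `w_i` is a right-to-left minimum of `w`. -/
def IsRtlMin (n : ℕ) (w : Equiv.Perm (Fin (n+1))) (i : Fin (n+1)) : Prop :=
  ∀ j : Fin (n+1), i < j → w i < w j

lemma lam_left_aux (n : ℕ) (w : Equiv.Perm (Fin (n+1))) (σ : Equiv.Perm (Fin n))
    (i ℓ : Fin (n+1)) (lσ : Fin n)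
    (hl : IsGreatest {j : Fin (n+1) | j < i ∧ w j < w i} ℓ)
    (hls : IsGreatest {k : Fin n | ℓ.val ≤ (σ k).val ∧ (σ k).val < i.val} lσ)
    (hq : ∀ q : Fin (n+1), i < q →
      (∀ j : Fin n, (σ lσ).val < j.val → j.val < q.val → σ.symm j < lσ) → w i < w q) :
    lam n w σ lσ = ((w i).val + 1 : ℤ) := by
  obtain ⟨⟨hℓσ, hσi⟩, hmax⟩ := hls
  obtain ⟨⟨hℓi, hwℓ⟩, hℓmax⟩ := hl
  have bars : ∀ j : Fin n, ℓ.val ≤ j.val → j.val < i.val → j ≠ σ lσ → σ.symm j < lσ := by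
    intro j h1 h2 h3
    have hmem : σ.symm j ∈ {k : Fin n | ℓ.val ≤ (σ k).val ∧ (σ k).val < i.val} := by
      simp only [Set.mem_setOf_eq, Equiv.apply_symm_apply]; exact ⟨h1, h2⟩
    rcases (hmax hmem).lt_or_eq with h | h
    · exact h
    · exact absurd (by rw [← h, Equiv.apply_symm_apply]) (Ne.symm h3)
  -- minR at step lσ equals (w i).val + 1
  have hiR : ((w i).val + 1) ∈ {v : ℕ | ∃ q : Fin (n+1), (σ lσ).val < q.val ∧
      (∀ j : Fin n, (σ lσ).val < j.val → j.val < q.val → σ.symm j < lσ) ∧ v = (w q).val + 1} := by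
    refine ⟨i, hσi, fun j hj1 hj2 => bars j (le_of_lt (lt_of_le_of_lt hℓσ hj1)) hj2
      (fun h => by rw [h] at hj1; exact lt_irrefl _ hj1), rfl⟩
  have hminR : minR n w σ lσ = (w i).val + 1 := by
    refine le_antisymm (Nat.sInf_le hiR) (le_csInf ⟨_, hiR⟩ ?_)
    rintro v ⟨q, hq1, hq2, rfl⟩
    rcases lt_trichotomy q.val i.val with h | h | h
    · by_contra hc
      push_neg at hc
      have hwq : w q < w i := by
        have : (w q).val < (w i).val := by omega
        exact this
      have : q ≤ ℓ := hℓmax ⟨h, hwq⟩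
      have : q.val ≤ ℓ.val := this
      omega
    · have : q = i := Fin.val_injective h
      subst this
      exact le_refl _
    · have : w i < w q := hq q h hq2
      have : (w i).val < (w q).val := this
      omega
  -- minL at step lσ is at most (w ℓ).val + 1 < (w i).val + 1
  have hminL : minL n w σ lσ ≤ (w ℓ).val + 1 := by
    refine Nat.sInf_le ⟨ℓ, hℓσ, fun j hj1 hj2 => bars j hj1 (hj2.trans hσi)
      (fun h => by rw [h] at hj2; exact lt_irrefl _ hj2), rfl⟩
  have hlt : minL n w σ lσ < minR n w σ lσ := by
    have : (w ℓ).val < (w i).val := hwℓ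
    omega
  rw [lam, if_pos hlt, hminR]
  push_cast
  rw [max_eq_right (by exact_mod_cast (hminR ▸ hlt.le) : (minL n w σ lσ : ℤ) ≤ ((w i).val : ℤ) + 1)]

lemma lam_right_aux (n : ℕ) (w : Equiv.Perm (Fin (n+1))) (σ : Equiv.Perm (Fin n))
    (i r : Fin (n+1)) (rσ : Fin n)
    (hr : IsLeast {j : Fin (n+1) | i < j ∧ w j < w i} r)
    (hrs : IsGreatest {k : Fin n | i.val ≤ (σ k).val ∧ (σ k).val < r.val} rσ)
    (hp : ∀ p : Fin (n+1), p < i →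
      (∀ j : Fin n, p.val ≤ j.val → j.val < (σ rσ).val → σ.symm j < rσ) → w i < w p) :
    lam n w σ rσ = -((w i).val + 1 : ℤ) := by
  obtain ⟨⟨hiσ, hσr⟩, hmax⟩ := hrs
  obtain ⟨⟨hir, hwr⟩, hrmin⟩ := hr
  have bars : ∀ j : Fin n, i.val ≤ j.val → j.val < r.val → j ≠ σ rσ → σ.symm j < rσ := by
    intro j h1 h2 h3
    have hmem : σ.symm j ∈ {k : Fin n | i.val ≤ (σ k).val ∧ (σ k).val < r.val} := by
      simp only [Set.mem_setOf_eq, Equiv.apply_symm_apply]; exact ⟨h1, h2⟩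
    rcases (hmax hmem).lt_or_eq with h | h
    · exact h
    · exact absurd (by rw [← h, Equiv.apply_symm_apply]) (Ne.symm h3)
  -- minL at step rσ equals (w i).val + 1
  have hiL : ((w i).val + 1) ∈ {v : ℕ | ∃ p : Fin (n+1), p.val ≤ (σ rσ).val ∧
      (∀ j : Fin n, p.val ≤ j.val → j.val < (σ rσ).val → σ.symm j < rσ) ∧ v = (w p).val + 1} := by
    refine ⟨i, hiσ, fun j hj1 hj2 => bars j hj1 (hj2.trans hσr)
      (fun h => by rw [h] at hj2; exact lt_irrefl _ hj2), rfl⟩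
  have hminL : minL n w σ rσ = (w i).val + 1 := by
    refine le_antisymm (Nat.sInf_le hiL) (le_csInf ⟨_, hiL⟩ ?_)
    rintro v ⟨p, hp1, hp2, rfl⟩
    rcases lt_trichotomy p.val i.val with h | h | h
    · have : w i < w p := hp p h hp2
      have : (w i).val < (w p).val := this
      omega
    · have : p = i := Fin.val_injective h
      subst this
      exact le_refl _
    · by_contra hc
      push_neg at hc
      have hwp : w p < w i := by
        have : (w p).val < (w i).val := by omega
        exact this
      have : r ≤ p := hrmin ⟨h, hwp⟩
      have : r.val ≤ p.val := this
      have : p.val ≤ (σ rσ).val := hp1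
      omega
  -- minR at step rσ is at most (w r).val + 1 < (w i).val + 1
  have hminR : minR n w σ rσ ≤ (w r).val + 1 := by
    refine Nat.sInf_le ⟨r, hσr, fun j hj1 hj2 => bars j (le_of_lt (lt_of_le_of_lt hiσ hj1)) hj2
      (fun h => by rw [h] at hj1; exact lt_irrefl _ hj1), rfl⟩
  have hlt : minR n w σ rσ < minL n w σ rσ := by
    have : (w r).val < (w i).val := hwr
    omega
  rw [lam, if_neg (by omega), hminL]
  push_cast
  rw [max_eq_left (by exact_mod_cast (hminL ▸ hlt.le) : (minR n w σ rσ : ℤ) ≤ ((w i).val : ℤ) + 1)]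

/-- Let `i` be a position with `w_i ≥ 2`; let `ℓ = max{j < i : w_j < w_i}`,
`r = min{j > i : w_j < w_i}` (when they exist), and let `ℓ_σ`, `r_σ` be the last left and
right bar positions, i.e. the largest steps `k` at which a bar in `{ℓ,…,i−1}`
(resp. `{i,…,r−1}`, as 0-indexed bar positions) is deleted. Then:
(1) if `w_i` is neither a left-to-right nor a right-to-left minimum, `ℓ_σ ≠ r_σ`, and
`λ_{ℓ_σ} = w_i` if `ℓ_σ < r_σ`, while `λ_{r_σ} = −w_i` if `r_σ < ℓ_σ`;
(2) if `w_i` is a right-to-left but not a left-to-right minimum, `λ_{ℓ_σ} = w_i`;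
(3) if `w_i` is a left-to-right but not a right-to-left minimum, `λ_{r_σ} = −w_i`. -/
theorem lam_from_last_bar_positions (n : ℕ) (hn : 1 ≤ n)
    (w : Equiv.Perm (Fin (n+1))) (σ : Equiv.Perm (Fin n)) (i : Fin (n+1))
    (hwi : 1 ≤ (w i).val) :
    ((¬ IsLtrMin n w i ∧ ¬ IsRtlMin n w i) →
      ∀ ℓ r : Fin (n+1),
        IsGreatest {j : Fin (n+1) | j < i ∧ w j < w i} ℓ →
        IsLeast {j : Fin (n+1) | i < j ∧ w j < w i} r →
        ∀ lσ rσ : Fin n,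
          IsGreatest {k : Fin n | ℓ.val ≤ (σ k).val ∧ (σ k).val < i.val} lσ →
          IsGreatest {k : Fin n | i.val ≤ (σ k).val ∧ (σ k).val < r.val} rσ →
          lσ ≠ rσ
            ∧ (lσ < rσ → lam n w σ lσ = ((w i).val + 1 : ℤ))
            ∧ (rσ < lσ → lam n w σ rσ = -((w i).val + 1 : ℤ)))
    ∧ ((IsRtlMin n w i ∧ ¬ IsLtrMin n w i) →
      ∀ ℓ : Fin (n+1), IsGreatest {j : Fin (n+1) | j < i ∧ w j < w i} ℓ →
        ∀ lσ : Fin n, IsGreatest {k : Fin n | ℓ.val ≤ (σ k).val ∧ (σ k).val < i.val} lσ →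
          lam n w σ lσ = ((w i).val + 1 : ℤ))
    ∧ ((IsLtrMin n w i ∧ ¬ IsRtlMin n w i) →
      ∀ r : Fin (n+1), IsLeast {j : Fin (n+1) | i < j ∧ w j < w i} r →
        ∀ rσ : Fin n, IsGreatest {k : Fin n | i.val ≤ (σ k).val ∧ (σ k).val < r.val} rσ →
          lam n w σ rσ = -((w i).val + 1 : ℤ)) := by
  refine ⟨?_, ?_, ?_⟩
  · rintro ⟨-, -⟩ ℓ r hl hr lσ rσ hls hrs
    have hσlσ : (σ lσ).val < i.val := hls.1.2
    have hσrσ : i.val ≤ (σ rσ).val := hrs.1.1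
    have hne : lσ ≠ rσ := by
      intro h
      rw [h] at hσlσ
      omega
    refine ⟨hne, ?_, ?_⟩
    · intro hlr
      refine lam_left_aux n w σ i ℓ lσ hl hls ?_
      intro q hiq hcond
      have hqσ : q.val ≤ (σ rσ).val := by
        by_contra hc
        push_neg at hc
        have := hcond (σ rσ) (by omega) hc
        rw [Equiv.symm_apply_apply] at this
        exact absurd hlr (not_lt.mpr this.le)
      have hqr : q.val < r.val := lt_of_le_of_lt hqσ hrs.1.2
      by_contra hcw
      push_neg at hcw
      have hwq : w q < w i := by
        have h1 : (w q).val ≤ (w i).val := hcw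
        have h2 : (w q).val ≠ (w i).val := fun h => by
          have : q = i := w.injective (Fin.val_injective h)
          subst this
          exact lt_irrefl _ hiq
        exact show (w q).val < (w i).val by omega
      have : r ≤ q := hr.2 ⟨hiq, hwq⟩
      have : r.val ≤ q.val := this
      omega
    · intro hrl
      refine lam_right_aux n w σ i r rσ hr hrs ?_
      intro p hpi hcond
      have hpσ : (σ lσ).val < p.val := by
        by_contra hc
        push_neg at hc
        have := hcond (σ lσ) hc (by omega)
        rw [Equiv.symm_apply_apply] at this
        exact absurd hrl (not_lt.mpr this.le)
      have hℓp : ℓ.val < p.val := lt_of_le_of_lt hls.1.1 hpσ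
      by_contra hcw
      push_neg at hcw
      have hwp : w p < w i := by
        have h1 : (w p).val ≤ (w i).val := hcw
        have h2 : (w p).val ≠ (w i).val := fun h => by
          have : p = i := w.injective (Fin.val_injective h)
          subst this
          exact lt_irrefl _ hpi
        exact show (w p).val < (w i).val by omega
      have : p ≤ ℓ := hl.2 ⟨hpi, hwp⟩
      have : p.val ≤ ℓ.val := this
      omega
  · rintro ⟨hrtl, -⟩ ℓ hl lσ hls
    exact lam_left_aux n w σ i ℓ lσ hl hls (fun q hiq _ => hrtl q hiq)
  · rintro ⟨hltr, -⟩ r hr rσ hrs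
    exact lam_right_aux n w σ i r rσ hr hrs (fun p hpi _ => hltr p hpi)
end

section
/- Let n ≥ 1, w ∈ S_{n+1} and σ ∈ Sym(n). Then the set Ino(w,σ) contains no value w_i that is a left-to-right minimum of w, and contains every value w_i ≥ 2 that is a right-to-left minimum of w. In particular {right-to-left minima of w} \ {1} ⊆ Ino(w,σ) ⊆ {values of w that are not left-to-right minima}. -/
open scoped Classical

/-- `Ino(w,σ) = {λ_i : λ_i > 0}` as a finite set of natural numbers. -/
noncomputable def InoSet (n : ℕ) (w : Equiv.Perm (Fin (n+1))) (σ : Equiv.Perm (Fin n)) :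
    Finset ℕ :=
  (Finset.univ.filter fun i : Fin n => 0 < lam n w σ i).image fun i => (lam n w σ i).toNat

/-!
A positive `λ_k` equals the minimum `min B'` of the right block, and it is larger than `min B`,
which is attained at a position left of that block; so a positive `λ_k` is never a left-to-right
minimum. Conversely, let `w_i ≥ 2` be a right-to-left minimum and let `a < i` be the nearest
position to its left with `w_a < w_i` (it exists because `1` lies left of `i`). At the step `k`
that deletes the last of the bars `a, …, i-1`, position `a` lies in the left block and `i` in the
right block, whose entries are all `≥ w_i`; hence `λ_k = w_i`.
-/

section General

variable {α β : Type*}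

theorem Equiv.exists_mem_forall_ne_lt [LinearOrder β] (e : α ≃ β) {J : Finset α}
    (hJ : J.Nonempty) : ∃ j ∈ J, ∀ j' ∈ J, j' ≠ j → e j' < e j := by
  obtain ⟨j, hj, hmax⟩ := J.exists_max_image e hJ
  exact ⟨j, hj, fun j' hj' hne => (hmax j' hj').lt_of_ne (e.injective.ne hne)⟩

theorem Function.Injective.exists_nearest_lt_left [LinearOrder α] [Fintype α] [LinearOrder β]
    {f : α → β} (hf : Function.Injective f) {i : α} (h : ∃ p < i, f p < f i) :
    ∃ a < i, f a < f i ∧ ∀ p, a < p → p < i → f i < f p := by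
  classical
  obtain ⟨p, hp⟩ := h
  obtain ⟨a, ha, hmax⟩ :=
    (Finset.univ.filter fun p => p < i ∧ f p < f i).exists_max_image id ⟨p, by simpa using hp⟩
  simp only [Finset.mem_filter, Finset.mem_univ, true_and, id] at ha hmax
  refine ⟨a, ha.1, ha.2, fun p hap hpi => ?_⟩
  refine (le_of_not_gt fun hlt => (hmax p ⟨hpi, hlt⟩).not_gt hap).lt_of_ne ?_
  exact hf.ne hpi.ne'

end General

section Merging

variable {n : ℕ} (w : Equiv.Perm (Fin (n+1))) (σ : Equiv.Perm (Fin n)) (k : Fin n)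

def InLeftBlock (p : Fin (n+1)) : Prop :=
  p.val ≤ (σ k).val ∧ ∀ j : Fin n, p.val ≤ j.val → j.val < (σ k).val → σ.symm j < k

def InRightBlock (q : Fin (n+1)) : Prop :=
  (σ k).val < q.val ∧ ∀ j : Fin n, (σ k).val < j.val → j.val < q.val → σ.symm j < k

theorem minL_eq : minL n w σ k = sInf {v | ∃ p, InLeftBlock σ k p ∧ v = (w p).val + 1} := by
  simp only [minL, InLeftBlock, and_assoc]

theorem minR_eq : minR n w σ k = sInf {v | ∃ q, InRightBlock σ k q ∧ v = (w q).val + 1} := by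
  simp only [minR, InRightBlock, and_assoc]

theorem exists_inLeftBlock_minL_eq :
    ∃ p, InLeftBlock σ k p ∧ minL n w σ k = (w p).val + 1 := by
  have hbar : InLeftBlock σ k (σ k).castSucc :=
    ⟨le_rfl, fun j h₁ h₂ => absurd h₂ (by simp only [Fin.val_castSucc] at h₁; omega)⟩
  rw [minL_eq]
  exact Nat.sInf_mem (s := {v | ∃ p, InLeftBlock σ k p ∧ v = (w p).val + 1})
    ⟨_, _, hbar, rfl⟩

theorem exists_inRightBlock_minR_eq :
    ∃ q, InRightBlock σ k q ∧ minR n w σ k = (w q).val + 1 := by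
  have hbar : InRightBlock σ k (σ k).succ :=
    ⟨by simp, fun j h₁ h₂ => absurd h₂ (by simp only [Fin.val_succ] at h₂ ⊢; omega)⟩
  rw [minR_eq]
  exact Nat.sInf_mem (s := {v | ∃ q, InRightBlock σ k q ∧ v = (w q).val + 1})
    ⟨_, _, hbar, rfl⟩

variable {σ k}

theorem minL_le {p : Fin (n+1)} (hp : InLeftBlock σ k p) : minL n w σ k ≤ (w p).val + 1 :=
  minL_eq w σ k ▸ Nat.sInf_le ⟨p, hp, rfl⟩

theorem minR_le {q : Fin (n+1)} (hq : InRightBlock σ k q) : minR n w σ k ≤ (w q).val + 1 :=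
  minR_eq w σ k ▸ Nat.sInf_le ⟨q, hq, rfl⟩

theorem minR_eq_of_forall_le {q : Fin (n+1)} (hq : InRightBlock σ k q)
    (hmin : ∀ q', InRightBlock σ k q' → w q ≤ w q') : minR n w σ k = (w q).val + 1 := by
  obtain ⟨q', hq', heq⟩ := exists_inRightBlock_minR_eq w σ k
  have : (w q).val ≤ (w q').val := hmin q' hq'
  exact (minR_le w hq).antisymm (by omega)

theorem lam_of_minL_lt_minR (h : minL n w σ k < minR n w σ k) :
    lam n w σ k = minR n w σ k := by
  rw [lam, if_pos h, ← Nat.cast_max, max_eq_right h.le]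

theorem lam_pos_iff : 0 < lam n w σ k ↔ minL n w σ k < minR n w σ k := by
  refine ⟨fun hpos => ?_, fun h => ?_⟩
  · by_contra h
    rw [lam, if_neg h, ← Nat.cast_max] at hpos
    exact (neg_nonpos.mpr (Nat.cast_nonneg _)).not_gt hpos
  · rw [lam_of_minL_lt_minR w h]
    exact_mod_cast (Nat.zero_le _).trans_lt h

theorem mem_InoSet_iff {v : ℕ} :
    v ∈ InoSet n w σ ↔ ∃ k, minL n w σ k < minR n w σ k ∧ minR n w σ k = v := by
  simp only [InoSet, Finset.mem_image, Finset.mem_filter, Finset.mem_univ, true_and]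
  refine exists_congr fun k => ⟨fun ⟨hpos, hv⟩ => ?_, fun ⟨h, hv⟩ => ?_⟩
  · have h := (lam_pos_iff w).mp hpos
    rw [lam_of_minL_lt_minR w h] at hv
    exact ⟨h, by simpa using hv⟩
  · exact ⟨(lam_pos_iff w).mpr h, by rw [lam_of_minL_lt_minR w h, ← hv]; simp⟩

theorem not_isLtrMin_of_minL_lt_minR {q : Fin (n+1)} (h : minL n w σ k < minR n w σ k)
    (hq : minR n w σ k = (w q).val + 1) : ¬ IsLtrMin n w q := by
  intro hltr
  obtain ⟨p, hp, hpeq⟩ := exists_inLeftBlock_minL_eq w σ k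
  obtain ⟨q', hq', hq'eq⟩ := exists_inRightBlock_minR_eq w σ k
  obtain rfl : q' = q := w.injective (Fin.ext (by omega))
  have := hltr p (Fin.lt_def.mpr (hp.1.trans_lt hq'.1))
  rw [Fin.lt_def] at this
  omega

theorem inLeftBlock_inRightBlock_of_last {a c : ℕ} {b : Fin n} (hb : a ≤ b.val ∧ b.val < c)
    (hlast : ∀ j : Fin n, a ≤ j.val → j.val < c → j ≠ b → σ.symm j < σ.symm b) :
    (∀ p : Fin (n+1), a ≤ p.val → p.val ≤ b.val → InLeftBlock σ (σ.symm b) p) ∧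
      ∀ q : Fin (n+1), b.val < q.val → q.val ≤ c → InRightBlock σ (σ.symm b) q := by
  simp only [InLeftBlock, InRightBlock, Equiv.apply_symm_apply]
  refine ⟨fun p hap hpb => ⟨hpb, fun j h₁ h₂ => ?_⟩,
    fun q hbq hqc => ⟨hbq, fun j h₁ h₂ => ?_⟩⟩
  all_goals exact hlast j (by omega) (by omega) (fun he => by rw [he] at h₁ h₂; omega)

theorem mem_InoSet_of_isRtlMin {i : Fin (n+1)} (hi : IsRtlMin n w i) (hwi : 1 ≤ (w i).val) :
    (w i).val + 1 ∈ InoSet n w σ := by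
  have hone : w.symm 0 < i := by
    by_contra! hle
    rcases hle.lt_or_eq with hlt | rfl
    · simpa using hi _ hlt
    · simp at hwi
  have hwone : w (w.symm 0) < w i := by rw [Equiv.apply_symm_apply, Fin.lt_def]; exact hwi
  obtain ⟨a, hai, hwa, hnear⟩ := w.injective.exists_nearest_lt_left ⟨w.symm 0, hone, hwone⟩
  obtain ⟨b, hbJ, hlast⟩ := σ.symm.exists_mem_forall_ne_lt
    (J := Finset.univ.filter fun j : Fin n => a.val ≤ j.val ∧ j.val < i.val)
    ⟨⟨a.val, by omega⟩, by simpa using hai⟩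
  simp only [Finset.mem_filter, Finset.mem_univ, true_and] at hbJ hlast
  obtain ⟨hleft, hright⟩ :=
    inLeftBlock_inRightBlock_of_last hbJ fun j h₁ h₂ => hlast j ⟨h₁, h₂⟩
  have hminR : minR n w σ (σ.symm b) = (w i).val + 1 := by
    refine minR_eq_of_forall_le w (hright i hbJ.2 le_rfl) fun q hq => ?_
    rcases lt_trichotomy q i with hqi | rfl | hiq
    · have hbq : b.val < q.val := by simpa using hq.1
      exact (hnear q (Fin.lt_def.mpr (hbJ.1.trans_lt hbq)) hqi).le
    · exact le_rfl
    · exact (hi q hiq).le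
  have hminL : minL n w σ (σ.symm b) ≤ (w a).val + 1 := minL_le w (hleft a le_rfl hbJ.1)
  have : (w a).val < (w i).val := hwa
  exact (mem_InoSet_iff w).mpr ⟨σ.symm b, by omega, hminR⟩

end Merging

theorem Ino_between_minima_general (n : ℕ)
    (w : Equiv.Perm (Fin (n+1))) (σ : Equiv.Perm (Fin n)) :
    (∀ i : Fin (n+1), IsLtrMin n w i → (w i).val + 1 ∉ InoSet n w σ)
      ∧ (∀ i : Fin (n+1), IsRtlMin n w i → 1 ≤ (w i).val →
          (w i).val + 1 ∈ InoSet n w σ) := by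
  refine ⟨fun i hi hmem => ?_, fun i hi hwi => mem_InoSet_of_isRtlMin w hi hwi⟩
  obtain ⟨k, hlt, hk⟩ := (mem_InoSet_iff w).mp hmem
  exact not_isLtrMin_of_minL_lt_minR w hlt hk hi

/-- `Ino(w,σ)` contains no value `w_i` that is a left-to-right minimum of
`w`, and contains every value `w_i ≥ 2` that is a right-to-left minimum of `w`; hence
`{right-to-left minima} ∖ {1} ⊆ Ino(w,σ) ⊆ {values that are not left-to-right minima}`. -/
theorem Ino_between_minima (n : ℕ) (hn : 1 ≤ n)
    (w : Equiv.Perm (Fin (n+1))) (σ : Equiv.Perm (Fin n)) :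
    (∀ i : Fin (n+1), IsLtrMin n w i → (w i).val + 1 ∉ InoSet n w σ)
      ∧ (∀ i : Fin (n+1), IsRtlMin n w i → 1 ≤ (w i).val →
          (w i).val + 1 ∈ InoSet n w σ) :=
  Ino_between_minima_general n w σ
end

section
/- Let n ≥ 1, let P be a partial order on {1,…,n}, and let ω, ω' : {1,…,n} → ℤ be injective maps such that for every cover relation a ⋖_P b one has ω(a) < ω(b) if and only if ω'(a) < ω'(b). Then Σ_{σ ∈ Lin(P)} 𝐭^{Des(ω∘σ)} = Σ_{σ ∈ Lin(P)} 𝐭^{Des(ω'∘σ)}, as an identity in the polynomial ring ℤ[t_1,…,t_{n−1}]. -/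
open scoped Classical
open MvPolynomial


/-- Descent generating function over linear extensions. -/
noncomputable def stmt11F (n : ℕ) (le : Fin n → Fin n → Prop) (ω : Fin n → ℤ) :
    MvPolynomial (Fin (n-1)) ℤ :=
  ∑ σ ∈ Finset.univ.filter
      (fun σ : Equiv.Perm (Fin n) => ∀ a b : Fin n, le a b → a ≠ b → σ.symm a < σ.symm b),
    ∏ k : Fin (n-1),
      (if ω (σ ⟨k.val + 1, by have := k.2; omega⟩) < ω (σ ⟨k.val, by have := k.2; omega⟩)
        then (X k : MvPolynomial (Fin (n-1)) ℤ) else 1)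

lemma stmt11_cond_iff {n : ℕ} (ω : Fin n → ℤ) (x y u v : Fin n) (hlt : ω x < ω y)
    (hadj : ∀ c : Fin n, c ≠ x → c ≠ y → ω c < ω x ∨ ω y < ω c)
    (huv : u ≠ v) (h1 : ¬(u = x ∧ v = y)) (h2 : ¬(u = y ∧ v = x)) :
    (ω v < ω u ↔ ω (Equiv.swap x y v) < ω (Equiv.swap x y u)) := by
  have hxy : x ≠ y := by rintro rfl; exact lt_irrefl _ hlt
  rcases eq_or_ne u x with rfl | hux
  · have hvy : v ≠ y := fun h => h1 ⟨rfl, h⟩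
    have hvx : v ≠ u := huv.symm
    rw [Equiv.swap_apply_left, Equiv.swap_apply_of_ne_of_ne hvx hvy]
    rcases hadj v hvx hvy with h | h
    · constructor <;> intro <;> linarith
    · constructor <;> intro <;> linarith
  · rcases eq_or_ne u y with rfl | huy
    · have hvx : v ≠ x := fun h => h2 ⟨rfl, h⟩
      have hvy : v ≠ u := huv.symm
      rw [Equiv.swap_apply_right, Equiv.swap_apply_of_ne_of_ne hvx hvy]
      rcases hadj v hvx hvy with h | h
      · constructor <;> intro <;> linarith
      · constructor <;> intro <;> linarith
    · rw [Equiv.swap_apply_of_ne_of_ne hux huy]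
      rcases eq_or_ne v x with rfl | hvx
      · rw [Equiv.swap_apply_left]
        rcases hadj u hux huy with h | h
        · constructor <;> intro <;> linarith
        · constructor <;> intro <;> linarith
      · rcases eq_or_ne v y with rfl | hvy
        · rw [Equiv.swap_apply_right]
          rcases hadj u hux huy with h | h
          · constructor <;> intro <;> linarith
          · constructor <;> intro <;> linarith
        · rw [Equiv.swap_apply_of_ne_of_ne hvx hvy]

lemma stmt11_swap_step (n : ℕ) (le : Fin n → Fin n → Prop)
    (ω : Fin n → ℤ) (x y : Fin n)
    (hlt : ω x < ω y)
    (hadj : ∀ c : Fin n, c ≠ x → c ≠ y → ω c < ω x ∨ ω y < ω c)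
    (hnc1 : ¬ (le x y ∧ x ≠ y ∧ ∀ c, le x c → le c y → c = x ∨ c = y))
    (hnc2 : ¬ (le y x ∧ y ≠ x ∧ ∀ c, le y c → le c x → c = y ∨ c = x)) :
    stmt11F n le ω = stmt11F n le (ω ∘ Equiv.swap x y) := by
  classical
  have hxy : x ≠ y := by rintro rfl; exact lt_irrefl _ hlt
  set S : Finset (Equiv.Perm (Fin n)) := Finset.univ.filter
      (fun σ : Equiv.Perm (Fin n) => ∀ a b : Fin n, le a b → a ≠ b → σ.symm a < σ.symm b)
    with hS
  set Adj : Equiv.Perm (Fin n) → Prop := fun σ =>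
    (σ.symm x).val + 1 = (σ.symm y).val ∨ (σ.symm y).val + 1 = (σ.symm x).val with hAdj
  have key : ∀ (σ : Equiv.Perm (Fin n)) (a : Fin n),
      (Equiv.swap x y * σ).symm a = σ.symm (Equiv.swap x y a) := by
    intro σ a
    rw [Equiv.symm_apply_eq]
    simp [Equiv.Perm.mul_apply]
  -- adjacency forces incomparability
  have hincomp : ∀ σ ∈ S, Adj σ → ¬ le x y ∧ ¬ le y x := by
    intro σ hσ hA
    rw [hS, Finset.mem_filter] at hσ
    have hlin := hσ.2
    constructor
    · intro h
      have hxy' := hlin x y h hxy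
      rw [Fin.lt_def] at hxy'
      have : ∃ c, le x c ∧ le c y ∧ ¬(c = x ∨ c = y) := by
        by_contra hcon
        push_neg at hcon
        exact hnc1 ⟨h, hxy, hcon⟩
      obtain ⟨c, h1, h2, h3⟩ := this
      push_neg at h3
      have hc1 := hlin x c h1 (Ne.symm h3.1)
      have hc2 := hlin c y h2 h3.2
      rw [Fin.lt_def] at hc1 hc2
      omega
    · intro h
      have hxy' := hlin y x h hxy.symm
      rw [Fin.lt_def] at hxy'
      have : ∃ c, le y c ∧ le c x ∧ ¬(c = y ∨ c = x) := by
        by_contra hcon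
        push_neg at hcon
        exact hnc2 ⟨h, hxy.symm, hcon⟩
      obtain ⟨c, h1, h2, h3⟩ := this
      push_neg at h3
      have hc1 := hlin y c h1 (Ne.symm h3.1)
      have hc2 := hlin c x h2 h3.2
      rw [Fin.lt_def] at hc1 hc2
      omega
  set φ : Equiv.Perm (Fin n) → Equiv.Perm (Fin n) := fun σ =>
    if Adj σ then Equiv.swap x y * σ else σ with hφ
  have hmem : ∀ σ ∈ S, φ σ ∈ S := by
    intro σ hσ
    simp only [hφ]
    by_cases hA : Adj σ
    · rw [if_pos hA]
      obtain ⟨hi1, hi2⟩ := hincomp σ hσ hA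
      rw [hS, Finset.mem_filter] at hσ ⊢
      refine ⟨Finset.mem_univ _, ?_⟩
      have hlin := hσ.2
      intro a b hab hne
      rw [key, key]
      rcases eq_or_ne a x with rfl | hax
      · have hby : b ≠ y := fun h => hi1 (h ▸ hab)
        rw [Equiv.swap_apply_left, Equiv.swap_apply_of_ne_of_ne (Ne.symm hne) hby]
        have h1 := hlin a b hab hne
        have h2 : σ.symm b ≠ σ.symm y := fun h => hby (σ.symm.injective h)
        have h3 := Fin.val_ne_of_ne h2
        rw [Fin.lt_def] at h1 ⊢
        rcases hA with h | h <;> omega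
      · rcases eq_or_ne a y with rfl | hay
        · have hbx : b ≠ x := fun h => hi2 (h ▸ hab)
          rw [Equiv.swap_apply_right, Equiv.swap_apply_of_ne_of_ne hbx (Ne.symm hne)]
          have h1 := hlin a b hab hne
          have h2 : σ.symm b ≠ σ.symm x := fun h => hbx (σ.symm.injective h)
          have h3 := Fin.val_ne_of_ne h2
          rw [Fin.lt_def] at h1 ⊢
          rcases hA with h | h <;> omega
        · rw [Equiv.swap_apply_of_ne_of_ne hax hay]
          rcases eq_or_ne b x with rfl | hbx
          · have hay' : a ≠ y := fun h => hi2 (h ▸ hab)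
            rw [Equiv.swap_apply_left]
            have h1 := hlin a b hab hne
            have h2 : σ.symm a ≠ σ.symm y := fun h => hay' (σ.symm.injective h)
            have h3 := Fin.val_ne_of_ne h2
            rw [Fin.lt_def] at h1 ⊢
            rcases hA with h | h <;> omega
          · rcases eq_or_ne b y with rfl | hby
            · have hax' : a ≠ x := hax
              rw [Equiv.swap_apply_right]
              have h1 := hlin a b hab hne
              have h2 : σ.symm a ≠ σ.symm x := fun h => hax (σ.symm.injective h)
              have h3 := Fin.val_ne_of_ne h2
              rw [Fin.lt_def] at h1 ⊢
              rcases hA with h | h <;> omega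
            · rw [Equiv.swap_apply_of_ne_of_ne hbx hby]
              exact hlin a b hab hne
    · rw [if_neg hA]; exact hσ
  have hAdjφ : ∀ σ, Adj σ → Adj (Equiv.swap x y * σ) := by
    intro σ hA
    have hx := key σ x
    have hy := key σ y
    rw [Equiv.swap_apply_left] at hx
    rw [Equiv.swap_apply_right] at hy
    rcases hA with h | h
    · exact Or.inr (by rw [hx, hy]; exact h)
    · exact Or.inl (by rw [hx, hy]; exact h)
  have hinv : ∀ σ ∈ S, φ (φ σ) = σ := by
    intro σ _
    simp only [hφ]
    by_cases hA : Adj σ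
    · rw [if_pos hA, if_pos (hAdjφ σ hA), ← mul_assoc, Equiv.swap_mul_self, one_mul]
    · rw [if_neg hA, if_neg hA]
  rw [stmt11F, stmt11F, ← hS]
  refine Finset.sum_nbij' φ φ hmem hmem hinv hinv ?_
  intro σ hσ
  simp only [hφ]
  by_cases hA : Adj σ
  · rw [if_pos hA]
    refine Finset.prod_congr rfl ?_
    intro k _
    congr 1
    simp [Equiv.Perm.mul_apply, Function.comp]
  · rw [if_neg hA]
    refine Finset.prod_congr rfl ?_
    intro k _
    have hk2 := k.2
    set a : Fin n := ⟨k.val, by omega⟩ with ha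
    set b : Fin n := ⟨k.val + 1, by omega⟩ with hb
    have hab : σ a ≠ σ b := by
      intro h
      have := σ.injective h
      rw [ha, hb, Fin.mk.injEq] at this
      omega
    have h1 : ¬(σ a = x ∧ σ b = y) := by
      rintro ⟨h1, h2⟩
      exact hA (Or.inl (by rw [← h1, ← h2, Equiv.symm_apply_apply, Equiv.symm_apply_apply]))
    have h2 : ¬(σ a = y ∧ σ b = x) := by
      rintro ⟨h1, h2⟩
      exact hA (Or.inr (by rw [← h1, ← h2, Equiv.symm_apply_apply, Equiv.symm_apply_apply]))
    have := stmt11_cond_iff ω x y (σ a) (σ b) hlt hadj hab h1 h2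
    simp only [Function.comp]
    rw [if_congr this rfl rfl]

theorem stmt11_aux (n : ℕ) (le : Fin n → Fin n → Prop) :
    ∀ (d : ℕ) (ω ω' : Fin n → ℤ),
      (Finset.univ.filter
        (fun p : Fin n × Fin n => ω p.1 < ω p.2 ∧ ω' p.2 < ω' p.1)).card ≤ d →
      Function.Injective ω → Function.Injective ω' →
      (∀ a b : Fin n, (le a b ∧ a ≠ b ∧ ∀ c : Fin n, le a c → le c b → c = a ∨ c = b) →
        (ω a < ω b ↔ ω' a < ω' b)) →
      stmt11F n le ω = stmt11F n le ω' := by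
  intro d
  induction d with
  | zero =>
    intro ω ω' hcard hi hi' _
    have hempty : ∀ a b : Fin n, ¬(ω a < ω b ∧ ω' b < ω' a) := by
      intro a b hab
      have h0 : (Finset.univ.filter
          (fun p : Fin n × Fin n => ω p.1 < ω p.2 ∧ ω' p.2 < ω' p.1)) = ∅ :=
        Finset.card_eq_zero.mp (Nat.le_zero.mp hcard)
      have : (a, b) ∈ (Finset.univ.filter
          (fun p : Fin n × Fin n => ω p.1 < ω p.2 ∧ ω' p.2 < ω' p.1)) := by
        rw [Finset.mem_filter]; exact ⟨Finset.mem_univ _, hab⟩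
      rw [h0] at this
      exact absurd this (Finset.notMem_empty _)
    have hkey : ∀ a b : Fin n, ω a < ω b ↔ ω' a < ω' b := by
      intro a b
      constructor
      · intro h
        rcases lt_trichotomy (ω' a) (ω' b) with h' | h' | h'
        · exact h'
        · exact absurd (hi' h') (by rintro rfl; exact lt_irrefl _ h)
        · exact absurd ⟨h, h'⟩ (hempty a b)
      · intro h
        rcases lt_trichotomy (ω a) (ω b) with h' | h' | h'
        · exact h'
        · exact absurd (hi h') (by rintro rfl; exact lt_irrefl _ h)
        · exact absurd ⟨h', h⟩ (hempty b a)
    rw [stmt11F, stmt11F]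
    refine Finset.sum_congr rfl ?_
    intro σ _
    refine Finset.prod_congr rfl ?_
    intro k _
    rw [if_congr (hkey _ _) rfl rfl]
  | succ d ih =>
    intro ω ω' hcard hi hi' hc
    by_cases hd : (Finset.univ.filter
        (fun p : Fin n × Fin n => ω p.1 < ω p.2 ∧ ω' p.2 < ω' p.1)).card ≤ d
    · exact ih ω ω' hd hi hi' hc
    · set D := Finset.univ.filter
        (fun p : Fin n × Fin n => ω p.1 < ω p.2 ∧ ω' p.2 < ω' p.1) with hD
      have hne : D.Nonempty := Finset.card_pos.mp (by omega)
      obtain ⟨⟨x, y⟩, hmemxy, hmin⟩ := Finset.exists_min_image D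
        (fun p => (Finset.univ.filter (fun c => ω p.1 < ω c ∧ ω c < ω p.2)).card) hne
      rw [hD, Finset.mem_filter] at hmemxy
      obtain ⟨-, hxylt, hxy'⟩ := hmemxy
      have hxyne : x ≠ y := by rintro rfl; exact lt_irrefl _ hxylt
      -- no value strictly between
      have hadj : ∀ c : Fin n, c ≠ x → c ≠ y → ω c < ω x ∨ ω y < ω c := by
        intro c hcx hcy
        by_contra hcon
        push_neg at hcon
        obtain ⟨hge1, hge2⟩ := hcon
        have hb1 : ω x < ω c := lt_of_le_of_ne hge1 (fun h => hcx (hi h.symm))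
        have hb2 : ω c < ω y := lt_of_le_of_ne hge2 (fun h => hcy (hi h))
        by_cases hc' : ω' c < ω' x
        · have hmemxc : (x, c) ∈ D := by
            rw [hD, Finset.mem_filter]; exact ⟨Finset.mem_univ _, hb1, hc'⟩
          have hsub : (Finset.univ.filter (fun e => ω x < ω e ∧ ω e < ω c)) ⊆
              (Finset.univ.filter (fun e => ω x < ω e ∧ ω e < ω y)) := by
            intro e he
            rw [Finset.mem_filter] at he ⊢
            exact ⟨he.1, he.2.1, lt_trans he.2.2 hb2⟩
          have hss : (Finset.univ.filter (fun e => ω x < ω e ∧ ω e < ω c)) ⊂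
              (Finset.univ.filter (fun e => ω x < ω e ∧ ω e < ω y)) := by
            refine ⟨hsub, fun h => ?_⟩
            have : c ∈ (Finset.univ.filter (fun e => ω x < ω e ∧ ω e < ω c)) :=
              h (by rw [Finset.mem_filter]; exact ⟨Finset.mem_univ _, hb1, hb2⟩)
            rw [Finset.mem_filter] at this
            exact lt_irrefl _ this.2.2
          have := hmin (x, c) hmemxc
          have hlt' := Finset.card_lt_card hss
          simp only at this hlt'
          omega
        · have hxc : ω' x < ω' c :=
            lt_of_le_of_ne (not_lt.mp hc') (fun h => hcx (hi' h.symm))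
          have hyc : ω' y < ω' c := lt_trans hxy' hxc
          have hmemcy : (c, y) ∈ D := by
            rw [hD, Finset.mem_filter]; exact ⟨Finset.mem_univ _, hb2, hyc⟩
          have hsub : (Finset.univ.filter (fun e => ω c < ω e ∧ ω e < ω y)) ⊆
              (Finset.univ.filter (fun e => ω x < ω e ∧ ω e < ω y)) := by
            intro e he
            rw [Finset.mem_filter] at he ⊢
            exact ⟨he.1, lt_trans hb1 he.2.1, he.2.2⟩
          have hss : (Finset.univ.filter (fun e => ω c < ω e ∧ ω e < ω y)) ⊂
              (Finset.univ.filter (fun e => ω x < ω e ∧ ω e < ω y)) := by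
            refine ⟨hsub, fun h => ?_⟩
            have : c ∈ (Finset.univ.filter (fun e => ω c < ω e ∧ ω e < ω y)) :=
              h (by rw [Finset.mem_filter]; exact ⟨Finset.mem_univ _, hb1, hb2⟩)
            rw [Finset.mem_filter] at this
            exact lt_irrefl _ this.2.1
          have := hmin (c, y) hmemcy
          have hlt' := Finset.card_lt_card hss
          simp only at this hlt'
          omega
      -- (x,y) and (y,x) are not covers
      have hnc1 : ¬ (le x y ∧ x ≠ y ∧ ∀ c, le x c → le c y → c = x ∨ c = y) := by
        intro hcv
        have := (hc x y hcv).mp hxylt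
        exact absurd this (not_lt.mpr (le_of_lt hxy'))
      have hnc2 : ¬ (le y x ∧ y ≠ x ∧ ∀ c, le y c → le c x → c = y ∨ c = x) := by
        intro hcv
        have := (hc y x hcv).mpr hxy'
        exact absurd this (not_lt.mpr (le_of_lt hxylt))
      set ω₂ : Fin n → ℤ := ω ∘ Equiv.swap x y with hω₂
      have hstep := stmt11_swap_step n le ω x y hxylt hadj hnc1 hnc2
      have hi₂ : Function.Injective ω₂ := hi.comp (Equiv.injective _)
      -- cover compatibility of ω₂ with ω'
      have hc₂ : ∀ a b : Fin n,
          (le a b ∧ a ≠ b ∧ ∀ c : Fin n, le a c → le c b → c = a ∨ c = b) →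
          (ω₂ a < ω₂ b ↔ ω' a < ω' b) := by
        intro a b hcv
        have hne : b ≠ a := hcv.2.1.symm
        have h1 : ¬(b = x ∧ a = y) := by
          rintro ⟨rfl, rfl⟩; exact hnc2 hcv
        have h2 : ¬(b = y ∧ a = x) := by
          rintro ⟨rfl, rfl⟩; exact hnc1 hcv
        have := stmt11_cond_iff ω x y b a hxylt hadj hne h1 h2
        rw [hω₂]
        simp only [Function.comp]
        rw [← this]
        exact hc a b hcv
      -- card decreases
      have hsub : (Finset.univ.filter
          (fun p : Fin n × Fin n => ω₂ p.1 < ω₂ p.2 ∧ ω' p.2 < ω' p.1)) ⊆ D.erase (x, y) := by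
        intro p hp
        rw [Finset.mem_filter] at hp
        obtain ⟨-, hp1, hp2⟩ := hp
        obtain ⟨a, b⟩ := p
        simp only at hp1 hp2
        have hpeq1 : ¬(a = x ∧ b = y) := by
          rintro ⟨rfl, rfl⟩
          rw [hω₂] at hp1
          simp only [Function.comp, Equiv.swap_apply_left, Equiv.swap_apply_right] at hp1
          exact absurd hp1 (not_lt.mpr (le_of_lt hxylt))
        have hpeq2 : ¬(a = y ∧ b = x) := by
          rintro ⟨rfl, rfl⟩
          exact absurd hp2 (not_lt.mpr (le_of_lt hxy'))
        have hne : b ≠ a := by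
          rintro rfl; exact lt_irrefl _ hp1
        have h1 : ¬(b = x ∧ a = y) := fun ⟨hh1, hh2⟩ => hpeq2 ⟨hh2, hh1⟩
        have h2 : ¬(b = y ∧ a = x) := fun ⟨hh1, hh2⟩ => hpeq1 ⟨hh2, hh1⟩
        have hiff := stmt11_cond_iff ω x y b a hxylt hadj hne h1 h2
        have hab : ω a < ω b := by
          apply hiff.mpr
          rw [hω₂] at hp1
          simpa [Function.comp] using hp1
        rw [Finset.mem_erase]
        constructor
        · intro h
          rw [Prod.mk.injEq] at h
          exact hpeq1 ⟨h.1, h.2⟩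
        · rw [hD, Finset.mem_filter]
          exact ⟨Finset.mem_univ _, hab, hp2⟩
      have hxyD : (x, y) ∈ D := by
        rw [hD, Finset.mem_filter]; exact ⟨Finset.mem_univ _, hxylt, hxy'⟩
      have hcard₂ : (Finset.univ.filter
          (fun p : Fin n × Fin n => ω₂ p.1 < ω₂ p.2 ∧ ω' p.2 < ω' p.1)).card ≤ d := by
        have h1 := Finset.card_le_card hsub
        have h2 := Finset.card_erase_of_mem hxyD
        omega
      rw [hstep]
      exact ih ω₂ ω' hcard₂ hi₂ hi' hc₂

/-- Let `le` be a partial order on `{1,…,n}` and `ω, ω' : {1,…,n} → ℤ`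
injective labelings agreeing in relative order on every cover relation of `le`. Then the
descent-set generating functions of `ω` and `ω'` over the linear extensions of `le` agree in
`ℤ[t_1,…,t_{n−1}] = MvPolynomial (Fin (n-1)) ℤ` (the variable `t_k` being `X ⟨k-1⟩`);
here `σ ∈ Lin(P)` iff `a <_P b` implies `σ⁻¹(a) < σ⁻¹(b)`, and
`Des(ω∘σ) = {k : ω(σ(k)) > ω(σ(k+1))}`. -/
theorem descent_genfun_of_compatible_labelings (n : ℕ) (hn : 1 ≤ n)
    (le : Fin n → Fin n → Prop) (hpo : IsPartialOrder (Fin n) le)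
    (ω ω' : Fin n → ℤ) (hω : Function.Injective ω) (hω' : Function.Injective ω')
    (hcov : ∀ a b : Fin n,
      (le a b ∧ a ≠ b ∧ ∀ c : Fin n, le a c → le c b → c = a ∨ c = b) →
      (ω a < ω b ↔ ω' a < ω' b)) :
    ∑ σ ∈ Finset.univ.filter
        (fun σ : Equiv.Perm (Fin n) => ∀ a b : Fin n, le a b → a ≠ b → σ.symm a < σ.symm b),
      ∏ k : Fin (n-1),
        (if ω (σ ⟨k.val + 1, by have := k.2; omega⟩) < ω (σ ⟨k.val, by have := k.2; omega⟩)
          then (X k : MvPolynomial (Fin (n-1)) ℤ) else 1)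
      = ∑ σ ∈ Finset.univ.filter
          (fun σ : Equiv.Perm (Fin n) => ∀ a b : Fin n, le a b → a ≠ b → σ.symm a < σ.symm b),
        ∏ k : Fin (n-1),
          (if ω' (σ ⟨k.val + 1, by have := k.2; omega⟩) < ω' (σ ⟨k.val, by have := k.2; omega⟩)
            then (X k : MvPolynomial (Fin (n-1)) ℤ) else 1) := by
  exact stmt11_aux n le _ ω ω' le_rfl hω hω' hcov
end

section
/- Let n ≥ 1. For every maximal chain M = (⊥ = M_0 ⋖ M_1 ⋖ ⋯ ⋖ M_n = ⊤) in the set partition lattice Π_n and every subset Y ⊆ {1,…,n}, there exists a unique pair (w,σ) ∈ S_{n+1} × Sym(n) such that (i) for each i ∈ {0,…,n}, the unordered set partition underlying the i-th set composition of the merging process of (w,σ) equals M_i, and (ii) {i ∈ {1,…,n} : λ_i > 0} = Y, where λ(w,σ) = (λ_1,…,λ_n). In particular, maximal chains of the set composition poset correspond bijectively to pairs (maximal chain in Π_n, subset of {1,…,n}). -/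
open scoped Classical

/-- The set composition of `{1,…,n+1}` obtained from the all-singleton composition
`{w_1}|{w_2}|⋯|{w_{n+1}}` by deleting the bars in `S` (bars 0-indexed: bar `j` lies between
positions `j` and `j+1`): consecutive positions are grouped together iff the bar between
them lies in `S`, and each group of positions is sent to its block of values under `w`. -/
def compOf (n : ℕ) (w : Equiv.Perm (Fin (n+1))) (S : Finset (Fin n)) :
    List (Finset (Fin (n+1))) :=
  (((List.finRange (n+1)).splitBy
      fun p _ => decide (∀ j : Fin n, j.val = p.val → j ∈ S)).map
    fun l => (l.map w).toFinset)

/-- The composition produced by the merging process of `(w,σ)` after `i` bar deletions: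
the deleted bars are `σ(k)` for (0-indexed) steps `k < i`. -/
def mergeStep (n : ℕ) (w : Equiv.Perm (Fin (n+1))) (σ : Equiv.Perm (Fin n)) (i : Fin (n+1)) :
    List (Finset (Fin (n+1))) :=
  compOf n w ((Finset.univ.filter fun k : Fin n => k.val < i.val).image σ)

/-- `L` is a set composition of `{1,…,n+1}`: a list of pairwise disjoint nonempty blocks
whose union is everything. -/
def IsComp (n : ℕ) (L : List (Finset (Fin (n+1)))) : Prop :=
  (∀ B ∈ L, B.Nonempty) ∧ List.Pairwise Disjoint L ∧ ∀ x : Fin (n+1), ∃ B ∈ L, x ∈ B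

/-- The cover relation of the poset `Σ_n` of set compositions: merge two consecutive
blocks. -/
def CompCov (n : ℕ) (L L' : List (Finset (Fin (n+1)))) : Prop :=
  ∃ (l₁ : List (Finset (Fin (n+1)))) (B B' : Finset (Fin (n+1))) (l₂ : List (Finset (Fin (n+1)))),
    L = l₁ ++ B :: B' :: l₂ ∧ L' = l₁ ++ (B ∪ B') :: l₂

/-- `M` is a maximal chain in `Σ_n`: a sequence of `n+1` set compositions starting at a
minimal element (an all-singleton composition), ending at the maximal element (the one-block
composition), each step being a cover relation. -/
def IsCompMaxChain (n : ℕ) (M : Fin (n+1) → List (Finset (Fin (n+1)))) : Prop :=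
  (∀ i, IsComp n (M i))
    ∧ (∀ B ∈ M 0, B.card = 1)
    ∧ (M (Fin.last n)).length = 1
    ∧ ∀ i : Fin n, CompCov n (M i.castSucc) (M i.succ)

namespace SK14

open Classical

/-! ### Section A/B: splitBy characterization -/

lemma split_key (d : ℕ → Prop) :
    ∀ (G : List (List ℕ)) (k m : ℕ),
      G.flatten = List.range' k m →
      (∀ c ∈ G, c ≠ []) →
      (∀ c ∈ G, c.Chain' (fun u _ => d u)) →
      G.Chain' (fun c _ => ∀ h : c ≠ [], ¬ d (c.getLast h)) →
      ∀ a b : ℕ, k ≤ a → a ≤ b → b < k + m →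
        ((∃ c ∈ G, a ∈ c ∧ b ∈ c) ↔ ∀ j, a ≤ j → j < b → d j) := by
  intro G
  induction G with
  | nil =>
    intro k m hflat _ _ _ a b hka hab hbm
    simp only [List.flatten_nil] at hflat
    rcases m with _ | m
    · omega
    · exact absurd hflat.symm (by simp [List.range'])
  | cons c G IH =>
    intro k m hflat hne hch hbd a b hka hab hbm
    set L := c.length with hL
    have hcne : c ≠ [] := hne c (by simp)
    have hLm : L ≤ m := by
      have := congrArg List.length hflat
      simp [hL] at this ⊢
      omega
    have hsplit : List.range' k L ++ List.range' (k+L) (m-L) = List.range' k m := by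
      have h2 : m - L + L = m := Nat.sub_add_cancel hLm
      have := List.range'_append (s := k) (m := L) (n := m-L) (step := 1)
      simpa [Nat.one_mul, h2, Nat.add_sub_of_le hLm] using this
    have hflat' : c ++ G.flatten = List.range' k L ++ List.range' (k+L) (m-L) := by
      rw [hsplit]; simpa using hflat
    obtain ⟨hc, hG⟩ := List.append_inj hflat' (by simp [hL])
    have hmemc : ∀ u : ℕ, u ∈ c ↔ k ≤ u ∧ u < k + L := by
      intro u; rw [hc]; exact List.mem_range'_1
    have hLpos : 0 < L := by
      rcases Nat.eq_zero_or_pos L with h0 | h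
      · exact absurd (List.length_eq_zero_iff.mp (hL ▸ h0)) hcne
      · exact h
    have hdin : ∀ j, k ≤ j → j + 1 < k + L → d j := by
      intro j hkj hjL
      have hch' := hch c (by simp)
      replace hch' := List.isChain_iff_getElem.mp hch'
      have hi : j - k < c.length - 1 := by omega
      have := hch' (j - k) (by omega)
      have hget : c.get ⟨j - k, by omega⟩ = j := by
        simp [hc, List.get_eq_getElem, List.getElem_range']
        omega
      rw [List.get_eq_getElem] at hget
      rwa [hget] at this
    by_cases hbL : b < k + L
    · refine iff_of_true ⟨c, by simp, (hmemc a).2 ⟨hka, by omega⟩, (hmemc b).2 ⟨by omega, hbL⟩⟩ ?_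
      intro j hja hjb
      exact hdin j (by omega) (by omega)
    · -- b ≥ k + L
      have hmemG : ∀ u : ℕ, ∀ c' ∈ G, u ∈ c' → k + L ≤ u ∧ u < k + m := by
        intro u c' hc' hu
        have : u ∈ G.flatten := List.mem_flatten.mpr ⟨c', hc', hu⟩
        rw [hG] at this
        have := List.mem_range'_1.mp this
        omega
      by_cases haL : k + L ≤ a
      · have hIH := IH (k+L) (m-L) hG (fun c' h => hne c' (by simp [h]))
          (fun c' h => hch c' (by simp [h])) (List.IsChain.tail hbd) a b haL hab (by omega)
        rw [← hIH]
        constructor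
        · rintro ⟨c', hc', hac', hbc'⟩
          rcases List.mem_cons.mp hc' with rfl | hc'
          · have := (hmemc a).1 hac'; omega
          · exact ⟨c', hc', hac', hbc'⟩
        · rintro ⟨c', hc', hac', hbc'⟩
          exact ⟨c', by simp [hc'], hac', hbc'⟩
      · -- a < k + L ≤ b : both sides false
        refine iff_of_false ?_ ?_
        · rintro ⟨c', hc', hac', hbc'⟩
          rcases List.mem_cons.mp hc' with rfl | hc'
          · have := (hmemc b).1 hbc'; omega
          · have := hmemG a c' hc' hac'; omega
        · intro hall
          have hGne : G ≠ [] := by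
            intro h0
            rw [h0] at hG
            simp only [List.flatten_nil] at hG
            rcases Nat.eq_zero_or_pos (m - L) with h1 | h1
            · omega
            · exact absurd hG.symm (by
                rcases Nat.exists_eq_add_of_lt h1 with ⟨p, hp⟩
                simp [show m - L = p + 1 by omega, List.range'])
          obtain ⟨c'', G'', rfl⟩ := List.exists_cons_of_ne_nil hGne
          have hrel := (List.isChain_cons_cons.mp hbd).1
          have hlast : c.getLast hcne = k + L - 1 := by
            rw [List.getLast_eq_getElem]
            simp [hc, List.getElem_range']
            omega
          have : ¬ d (k + L - 1) := hlast ▸ hrel hcne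
          exact this (hall (k + L - 1) (by omega) (by omega))

lemma finRange_map_val (n : ℕ) : (List.finRange n).map Fin.val = List.range' 0 n := by
  rw [← List.range_eq_range']
  apply List.ext_getElem <;> simp

variable {n : ℕ}

lemma mem_compOf_iff (x y : Fin (n+1)) :
    (∃ B ∈ compOf n w S, x ∈ B ∧ y ∈ B) ↔
    (∀ j : Fin n, min (w.symm x).val (w.symm y).val ≤ j.val →
      j.val < max (w.symm x).val (w.symm y).val → j ∈ S) := by
  classical
  set r : Fin (n+1) → Fin (n+1) → Bool :=
    fun p _ => decide (∀ j : Fin n, j.val = p.val → j ∈ S) with hr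
  set G : List (List (Fin (n+1))) := (List.finRange (n+1)).splitBy r with hG
  set d : ℕ → Prop := fun u => ∀ j : Fin n, j.val = u → j ∈ S with hd
  set G' : List (List ℕ) := G.map (List.map Fin.val) with hG'
  have hflat : G'.flatten = List.range' 0 (n+1) := by
    rw [hG', ← List.map_flatten, hG, List.flatten_splitBy, finRange_map_val]
  have hne : ∀ c ∈ G', c ≠ [] := by
    rintro c hc
    obtain ⟨c0, hc0, rfl⟩ := List.mem_map.mp hc
    have := List.ne_nil_of_mem_splitBy hc0
    simpa using this
  have hch : ∀ c ∈ G', c.Chain' (fun u _ => d u) := by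
    rintro c hc
    obtain ⟨c0, hc0, rfl⟩ := List.mem_map.mp hc
    simp only [List.Chain']
    rw [List.isChain_map]
    have := List.isChain_of_mem_splitBy hc0
    refine this.imp ?_
    intro p q h
    simp only [hr, decide_eq_true_eq] at h
    exact h
  have hbd : G'.Chain' (fun c _ => ∀ h : c ≠ [], ¬ d (c.getLast h)) := by
    rw [hG']
    simp only [List.Chain']
    rw [List.isChain_map]
    have := List.isChain_getLast_head_splitBy r (List.finRange (n+1))
    rw [← hG] at this
    refine this.imp ?_
    rintro c c' ⟨hc, hc', hfalse⟩ h
    rw [List.getLast_map]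
    intro hdl
    have : r (c.getLast hc) (c'.head hc') = true := by
      simp only [hr, decide_eq_true_eq]
      exact hdl
    rw [hfalse] at this
    exact absurd this (by simp)
  -- membership transfer
  have hmem : ∀ (u : Fin (n+1)) (c0 : List (Fin (n+1))), u.val ∈ c0.map Fin.val ↔ u ∈ c0 :=
    fun u c0 => List.mem_map_of_injective Fin.val_injective
  have key : ∀ a b : Fin (n+1), a.val ≤ b.val →
      ((∃ c ∈ G, a ∈ c ∧ b ∈ c) ↔ ∀ j : ℕ, a.val ≤ j → j < b.val → d j) := by
    intro a b hab
    have := split_key d G' 0 (n+1) hflat hne hch hbd a.val b.val (Nat.zero_le _) hab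
      (by omega)
    rw [← this]
    constructor
    · rintro ⟨c, hc, ha, hb⟩
      exact ⟨c.map Fin.val, List.mem_map_of_mem hc, (hmem a c).mpr ha, (hmem b c).mpr hb⟩
    · rintro ⟨c', hc', ha, hb⟩
      obtain ⟨c0, hc0, rfl⟩ := List.mem_map.mp hc'
      exact ⟨c0, hc0, (hmem a c0).mp ha, (hmem b c0).mp hb⟩
  -- blocks
  have hblock : (∃ B ∈ compOf n w S, x ∈ B ∧ y ∈ B) ↔
      (∃ c ∈ G, w.symm x ∈ c ∧ w.symm y ∈ c) := by
    unfold compOf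
    rw [← hG]
    constructor
    · rintro ⟨B, hB, hx, hy⟩
      obtain ⟨c, hc, rfl⟩ := List.mem_map.mp hB
      refine ⟨c, hc, ?_, ?_⟩
      · obtain ⟨u, hu, hux⟩ := List.mem_map.mp (List.mem_toFinset.mp hx)
        rwa [show u = w.symm x by rw [← hux]; simp] at hu
      · obtain ⟨u, hu, huy⟩ := List.mem_map.mp (List.mem_toFinset.mp hy)
        rwa [show u = w.symm y by rw [← huy]; simp] at hu
    · rintro ⟨c, hc, hx, hy⟩
      refine ⟨(c.map w).toFinset, List.mem_map_of_mem hc, ?_, ?_⟩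
      · rw [List.mem_toFinset]
        exact List.mem_map.mpr ⟨w.symm x, hx, by simp⟩
      · rw [List.mem_toFinset]
        exact List.mem_map.mpr ⟨w.symm y, hy, by simp⟩
  rw [hblock]
  rcases le_total (w.symm x).val (w.symm y).val with h | h
  · rw [key _ _ h]
    constructor
    · intro H j hj1 hj2
      exact H j.val (by omega) (by omega) j rfl
    · intro H j hj1 hj2
      intro jj hjj
      have hjn : j < n := by
        have : j < (w.symm y).val := by omega
        have := (w.symm y).isLt
        omega
      have := H ⟨j, hjn⟩ (by simp; omega) (by simp; omega)
      have hjje : jj = ⟨j, hjn⟩ := Fin.ext (by simpa using hjj)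
      rw [hjje]; exact this
  · have hsw : (∃ c ∈ G, w.symm x ∈ c ∧ w.symm y ∈ c) ↔
        (∃ c ∈ G, w.symm y ∈ c ∧ w.symm x ∈ c) := by
      constructor <;> (rintro ⟨c, hc, h1, h2⟩; exact ⟨c, hc, h2, h1⟩)
    rw [hsw, key _ _ h]
    constructor
    · intro H j hj1 hj2
      exact H j.val (by omega) (by omega) j rfl
    · intro H j hj1 hj2
      intro jj hjj
      have hjn : j < n := by
        have : j < (w.symm x).val := by omega
        have := (w.symm x).isLt
        omega
      have := H ⟨j, hjn⟩ (by simp; omega) (by simp; omega)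
      have hjje : jj = ⟨j, hjn⟩ := Fin.ext (by simpa using hjj)
      rw [hjje]; exact this

lemma mem_mergeStep_iff (w : Equiv.Perm (Fin (n+1))) (σ : Equiv.Perm (Fin n))
    (i : Fin (n+1)) (x y : Fin (n+1)) :
    (∃ B ∈ mergeStep n w σ i, x ∈ B ∧ y ∈ B) ↔
    (∀ j : Fin n, min (w.symm x).val (w.symm y).val ≤ j.val →
      j.val < max (w.symm x).val (w.symm y).val → (σ.symm j).val < i.val) := by
  rw [mergeStep, mem_compOf_iff]
  refine forall_congr' fun j => forall_congr' fun h1 => forall_congr' fun h2 => ?_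
  rw [Finset.mem_image]
  constructor
  · rintro ⟨k, hk, rfl⟩
    simp only [Finset.mem_filter] at hk
    simpa using hk.2
  · intro h
    exact ⟨σ.symm j, by simp [h], by simp⟩

/-! ### Section C: the partition chain -/

variable (M : Fin (n+1) → Setoid (Fin (n+1)))

/-- first time (as a natural number index) at which `x` and `y` are related. -/
noncomputable def tval (x y : Fin (n+1)) : ℕ :=
  sInf {i : ℕ | ∃ h : i < n+1, (M ⟨i, h⟩).r x y}

lemma Mmono (hMcov : ∀ i : Fin n, M i.castSucc ⋖ M i.succ) :
    ∀ i j : Fin (n+1), i ≤ j → M i ≤ M j := by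
  have key : ∀ (b : ℕ) (hb : b < n+1) (a : ℕ) (ha : a < n+1), a ≤ b →
      M ⟨a, ha⟩ ≤ M ⟨b, hb⟩ := by
    intro b
    induction b with
    | zero =>
      intro hb a ha h
      have : a = 0 := by omega
      subst this
      exact le_refl _
    | succ b IH =>
      intro hb a ha h
      rcases Nat.lt_or_ge a (b+1) with h' | h'
      · have hb' : b < n+1 := by omega
        refine le_trans (IH hb' a ha (by omega)) ?_
        have hcov := (hMcov ⟨b, by omega⟩).le
        have e1 : (⟨b, by omega⟩ : Fin n).castSucc = (⟨b, hb'⟩ : Fin (n+1)) := rfl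
        have e2 : (⟨b, by omega⟩ : Fin n).succ = (⟨b+1, hb⟩ : Fin (n+1)) := rfl
        rwa [e1, e2] at hcov
      · have : a = b+1 := by omega
        subst this
        exact le_refl _
  intro i j hij
  have := key j.val j.isLt i.val i.isLt hij
  simpa using this

lemma tval_nonempty (hMtop : M (Fin.last n) = ⊤) (x y : Fin (n+1)) :
    {i : ℕ | ∃ h : i < n+1, (M ⟨i, h⟩).r x y}.Nonempty := by
  refine ⟨n, by omega, ?_⟩
  have : (⟨n, by omega⟩ : Fin (n+1)) = Fin.last n := rfl
  rw [this, hMtop]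
  exact trivial

lemma rel_iff (hMtop : M (Fin.last n) = ⊤)
    (hMcov : ∀ i : Fin n, M i.castSucc ⋖ M i.succ) (x y : Fin (n+1)) (i : Fin (n+1)) :
    (M i).r x y ↔ tval M x y ≤ i.val := by
  constructor
  · intro h
    exact Nat.sInf_le ⟨i.isLt, by simpa using h⟩
  · intro h
    obtain ⟨hlt, hrel⟩ := Nat.sInf_mem (tval_nonempty M hMtop x y)
    exact Mmono M hMcov ⟨tval M x y, hlt⟩ i h hrel

lemma tval_le (hMtop : M (Fin.last n) = ⊤) (x y : Fin (n+1)) : tval M x y ≤ n := by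
  apply Nat.sInf_le
  refine ⟨by omega, ?_⟩
  have e : (⟨n, by omega⟩ : Fin (n+1)) = Fin.last n := rfl
  rw [e, hMtop]
  exact trivial

lemma tval_pos (hM0 : M 0 = ⊥) (hMtop : M (Fin.last n) = ⊤)
    (hMcov : ∀ i : Fin n, M i.castSucc ⋖ M i.succ) {x y : Fin (n+1)}
    (hxy : x ≠ y) : 0 < tval M x y := by
  by_contra hc
  push_neg at hc
  have hrel : (M 0).r x y := (rel_iff M hMtop hMcov x y 0).mpr (by simpa using hc)
  rw [hM0] at hrel
  exact hxy hrel

lemma tval_symm (x y : Fin (n+1)) : tval M x y = tval M y x := by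
  unfold tval
  congr 1
  ext i
  exact ⟨fun ⟨h, hr⟩ => ⟨h, (M _).symm' hr⟩, fun ⟨h, hr⟩ => ⟨h, (M _).symm' hr⟩⟩

/-- 0-indexed merge step of a pair of distinct elements. -/
noncomputable def kk (hn : 1 ≤ n) (hMtop : M (Fin.last n) = ⊤) (x y : Fin (n+1)) : Fin n :=
  ⟨tval M x y - 1, by have := tval_le M hMtop x y; omega⟩

lemma kk_newly (hn : 1 ≤ n) (hM0 : M 0 = ⊥) (hMtop : M (Fin.last n) = ⊤)
    (hMcov : ∀ i : Fin n, M i.castSucc ⋖ M i.succ) {x y : Fin (n+1)} (hxy : x ≠ y) :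
    ¬ (M (kk M hn hMtop x y).castSucc).r x y ∧ (M (kk M hn hMtop x y).succ).r x y := by
  have hpos := tval_pos M hM0 hMtop hMcov hxy
  constructor
  · rw [rel_iff M hMtop hMcov]
    simp only [kk, Fin.coe_castSucc]
    omega
  · rw [rel_iff M hMtop hMcov]
    simp only [kk, Fin.val_succ]
    omega

lemma cover_struct {r r' : Setoid (Fin (n+1))} (h : r ⋖ r') {x y : Fin (n+1)}
    (hxy : ¬ r.r x y) (hxy' : r'.r x y) :
    ∀ a b, r'.r a b ↔ (r.r a b ∨ (r.r a x ∧ r.r y b) ∨ (r.r a y ∧ r.r x b)) := by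
  set srel : Fin (n+1) → Fin (n+1) → Prop :=
    fun a b => r.r a b ∨ (r.r a x ∧ r.r y b) ∨ (r.r a y ∧ r.r x b) with hsrel
  have hequiv : Equivalence srel := by
    constructor
    · intro a
      exact Or.inl (r.refl' a)
    · intro a b hab
      rcases hab with h0 | ⟨h1, h2⟩ | ⟨h1, h2⟩
      · exact Or.inl (r.symm' h0)
      · exact Or.inr (Or.inr ⟨r.symm' h2, r.symm' h1⟩)
      · exact Or.inr (Or.inl ⟨r.symm' h2, r.symm' h1⟩)
    · intro a b c hab hbc
      rcases hab with h0 | ⟨h1, h2⟩ | ⟨h1, h2⟩ <;>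
        rcases hbc with g0 | ⟨g1, g2⟩ | ⟨g1, g2⟩
      · exact Or.inl (r.trans' h0 g0)
      · exact Or.inr (Or.inl ⟨r.trans' h0 g1, g2⟩)
      · exact Or.inr (Or.inr ⟨r.trans' h0 g1, g2⟩)
      · exact Or.inr (Or.inl ⟨h1, r.trans' h2 g0⟩)
      · exact Or.inr (Or.inl ⟨h1, g2⟩)
      · exact Or.inl (r.trans' h1 g2)
      · exact Or.inr (Or.inr ⟨h1, r.trans' h2 g0⟩)
      · exact Or.inl (r.trans' h1 g2)
      · exact Or.inr (Or.inr ⟨h1, g2⟩)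
  set s : Setoid (Fin (n+1)) := ⟨srel, hequiv⟩ with hs
  have hrs : r < s := by
    rw [lt_iff_le_not_ge]
    constructor
    · rw [Setoid.le_def]
      intro a b hab
      exact Or.inl hab
    · intro hle
      exact hxy (Setoid.le_def.mp hle (Or.inr (Or.inl ⟨r.refl' x, r.refl' y⟩)))
  have hsr' : s ≤ r' := by
    rw [Setoid.le_def]
    intro a b hab
    rcases hab with h0 | ⟨h1, h2⟩ | ⟨h1, h2⟩
    · exact Setoid.le_def.mp h.le h0
    · exact r'.trans' (Setoid.le_def.mp h.le h1)
        (r'.trans' hxy' (Setoid.le_def.mp h.le h2))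
    · exact r'.trans' (Setoid.le_def.mp h.le h1)
        (r'.trans' (r'.symm' hxy') (Setoid.le_def.mp h.le h2))
  have heq : s = r' := by
    rcases lt_or_eq_of_le hsr' with hlt | he
    · exact absurd hlt (h.2 hrs)
    · exact he
  intro a b
  rw [← heq]
  rfl

/-- min (value) of the class of `x` at time `k.castSucc`. -/
noncomputable def mB (k : Fin n) (x : Fin (n+1)) : ℕ :=
  sInf {v : ℕ | ∃ z : Fin (n+1), (M k.castSucc).r z x ∧ v = z.val}

lemma mB_eq_of_rel {k : Fin n} {x x' : Fin (n+1)} (h : (M k.castSucc).r x x') :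
    mB M k x = mB M k x' := by
  unfold mB
  congr 1
  ext v
  constructor
  · rintro ⟨z, hz, rfl⟩
    exact ⟨z, (M _).trans' hz h, rfl⟩
  · rintro ⟨z, hz, rfl⟩
    exact ⟨z, (M _).trans' hz ((M _).symm' h), rfl⟩

lemma mB_ne {k : Fin n} {x y : Fin (n+1)} (h : ¬ (M k.castSucc).r x y) :
    mB M k x ≠ mB M k y := by
  intro he
  obtain ⟨zx, hzx, hvx⟩ := Nat.sInf_mem (⟨x.val, x, (M _).refl' x, rfl⟩ :
    {v : ℕ | ∃ z : Fin (n+1), (M k.castSucc).r z x ∧ v = z.val}.Nonempty)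
  obtain ⟨zy, hzy, hvy⟩ := Nat.sInf_mem (⟨y.val, y, (M _).refl' y, rfl⟩ :
    {v : ℕ | ∃ z : Fin (n+1), (M k.castSucc).r z y ∧ v = z.val}.Nonempty)
  have : zx = zy := Fin.ext (by rw [← hvx, ← hvy]; exact he)
  subst this
  exact h ((M _).trans' ((M _).symm' hzx) hzy)

/-- the strict order on `Fin (n+1)` induced by the chain and the sign set. -/
noncomputable def prec (hn : 1 ≤ n) (hMtop : M (Fin.last n) = ⊤) (Y : Finset (Fin n))
    (x y : Fin (n+1)) : Prop :=
  x ≠ y ∧ ((mB M (kk M hn hMtop x y) x < mB M (kk M hn hMtop x y) y) ↔ kk M hn hMtop x y ∈ Y)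

lemma prec_coherent (hn : 1 ≤ n) (hMtop : M (Fin.last n) = ⊤)
    (hMcov : ∀ i : Fin n, M i.castSucc ⋖ M i.succ) (Y : Finset (Fin n))
    {t : Fin (n+1)} {x x' y y' : Fin (n+1)}
    (hxx' : (M t).r x x') (hyy' : (M t).r y y') (hnxy : ¬ (M t).r x y) :
    prec M hn hMtop Y x y ↔ prec M hn hMtop Y x' y' := by
  have hxy : x ≠ y := fun he => hnxy (he ▸ (M t).refl' x)
  have hnxy' : ¬ (M t).r x' y' := fun h =>
    hnxy ((M t).trans' hxx' ((M t).trans' h ((M t).symm' hyy')))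
  have hx'y' : x' ≠ y' := fun he => hnxy' (he ▸ (M t).refl' x')
  have htgt : t.val < tval M x y := by
    by_contra hc; push_neg at hc
    exact hnxy ((rel_iff M hMtop hMcov x y t).mpr hc)
  have htgt' : t.val < tval M x' y' := by
    by_contra hc; push_neg at hc
    exact hnxy' ((rel_iff M hMtop hMcov x' y' t).mpr hc)
  have step : ∀ u u' v v' : Fin (n+1), (M t).r u u' → (M t).r v v' →
      t.val < tval M u' v' → tval M u v ≤ tval M u' v' := by
    intro u u' v v' huu hvv hlt
    set i : Fin (n+1) := ⟨tval M u' v', by have := tval_le M hMtop u' v'; omega⟩ with hi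
    have hrel' : (M i).r u' v' := (rel_iff M hMtop hMcov u' v' i).mpr (le_refl _)
    have hti : t ≤ i := by
      rw [Fin.le_def]; simp [hi]; omega
    have h1 : (M i).r u u' := Mmono M hMcov t i hti huu
    have h2 : (M i).r v v' := Mmono M hMcov t i hti hvv
    have : (M i).r u v := (M i).trans' h1 ((M i).trans' hrel' ((M i).symm' h2))
    exact (rel_iff M hMtop hMcov u v i).mp this
  have htv : tval M x y = tval M x' y' := le_antisymm
    (step x x' y y' hxx' hyy' htgt')
    (step x' x y' y ((M t).symm' hxx') ((M t).symm' hyy') htgt)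
  have hkk : kk M hn hMtop x y = kk M hn hMtop x' y' := Fin.ext (by simp [kk, htv])
  have hts : t ≤ (kk M hn hMtop x y).castSucc := by
    rw [Fin.le_def]
    simp [kk]
    omega
  have hmx : mB M (kk M hn hMtop x y) x = mB M (kk M hn hMtop x y) x' :=
    mB_eq_of_rel M (Mmono M hMcov t _ hts hxx')
  have hmy : mB M (kk M hn hMtop x y) y = mB M (kk M hn hMtop x y) y' :=
    mB_eq_of_rel M (Mmono M hMcov t _ hts hyy')
  unfold prec
  rw [← hkk, ← hmx, ← hmy]
  exact ⟨fun ⟨_, h⟩ => ⟨hx'y', h⟩, fun ⟨_, h⟩ => ⟨hxy, h⟩⟩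

lemma prec_total (hn : 1 ≤ n) (hM0 : M 0 = ⊥) (hMtop : M (Fin.last n) = ⊤)
    (hMcov : ∀ i : Fin n, M i.castSucc ⋖ M i.succ) (Y : Finset (Fin n))
    {x y : Fin (n+1)} (hxy : x ≠ y) :
    prec M hn hMtop Y x y ∨ prec M hn hMtop Y y x := by
  have hkk : kk M hn hMtop y x = kk M hn hMtop x y := Fin.ext (by simp [kk, tval_symm M x y])
  have hne := mB_ne M (kk_newly M hn hM0 hMtop hMcov hxy).1
  by_cases hY : kk M hn hMtop x y ∈ Y
  · rcases lt_or_gt_of_ne hne with h | h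
    · exact Or.inl ⟨hxy, by simp [hY, h]⟩
    · exact Or.inr ⟨hxy.symm, by simp [hkk, hY, h]⟩
  · rcases lt_or_gt_of_ne hne with h | h
    · exact Or.inr ⟨hxy.symm, by simp [hkk, hY]; omega⟩
    · exact Or.inl ⟨hxy, by simp [hY]; omega⟩

lemma prec_asymm (hn : 1 ≤ n) (hM0 : M 0 = ⊥) (hMtop : M (Fin.last n) = ⊤)
    (hMcov : ∀ i : Fin n, M i.castSucc ⋖ M i.succ) (Y : Finset (Fin n))
    {x y : Fin (n+1)} (h1 : prec M hn hMtop Y x y) : ¬ prec M hn hMtop Y y x := by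
  rintro ⟨hyx, h2⟩
  obtain ⟨hxy, h1'⟩ := h1
  have hkk : kk M hn hMtop y x = kk M hn hMtop x y := Fin.ext (by simp [kk, tval_symm M x y])
  rw [hkk] at h2
  have hne := mB_ne M (kk_newly M hn hM0 hMtop hMcov hxy).1
  by_cases hY : kk M hn hMtop x y ∈ Y
  · have a1 := h1'.mpr hY
    have a2 := h2.mpr hY
    omega
  · have a1 : ¬ _ := fun h => hY (h1'.mp h)
    have a2 : ¬ _ := fun h => hY (h2.mp h)
    omega

lemma prec_irrefl (hn : 1 ≤ n) (hMtop : M (Fin.last n) = ⊤) (Y : Finset (Fin n))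
    (x : Fin (n+1)) : ¬ prec M hn hMtop Y x x := fun h => h.1 rfl

lemma prec_trans (hn : 1 ≤ n) (hM0 : M 0 = ⊥) (hMtop : M (Fin.last n) = ⊤)
    (hMcov : ∀ i : Fin n, M i.castSucc ⋖ M i.succ) (Y : Finset (Fin n))
    {x y z : Fin (n+1)} (h1 : prec M hn hMtop Y x y) (h2 : prec M hn hMtop Y y z) :
    prec M hn hMtop Y x z := by
  obtain ⟨hxy, hiff1⟩ := h1
  obtain ⟨hyz, hiff2⟩ := h2
  rcases lt_trichotomy (tval M x y) (tval M y z) with hlt | heq | hgt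
  · -- x ~ y before y,z merge
    set k := kk M hn hMtop y z with hk
    have hrelxy : (M k.castSucc).r x y := by
      rw [rel_iff M hMtop hMcov]
      simp [hk, kk]
      omega
    have hnyz := (kk_newly M hn hM0 hMtop hMcov hyz).1
    have := prec_coherent M hn hMtop hMcov Y ((M k.castSucc).symm' hrelxy)
      ((M k.castSucc).refl' z) hnyz
    exact this.mp ⟨hyz, hiff2⟩
  · -- same step: contradiction via cover structure
    exfalso
    set k := kk M hn hMtop x y with hk
    have hkeq : kk M hn hMtop y z = k := Fin.ext (by simp [hk, kk, heq])
    have hnxy := (kk_newly M hn hM0 hMtop hMcov hxy).1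
    have hrxy := (kk_newly M hn hM0 hMtop hMcov hxy).2
    have hnyz0 := (kk_newly M hn hM0 hMtop hMcov hyz).1
    have hryz0 := (kk_newly M hn hM0 hMtop hMcov hyz).2
    rw [hkeq] at hnyz0 hryz0
    have hstruct := cover_struct (hMcov k) hnxy hrxy y z
    have hxz : (M k.castSucc).r x z := by
      rcases hstruct.mp hryz0 with h0 | ⟨h1', h2'⟩ | ⟨h1', h2'⟩
      · exact absurd h0 hnyz0
      · exact absurd h2' hnyz0
      · exact h2'
    have hmxz : mB M k x = mB M k z := mB_eq_of_rel M hxz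
    rw [hkeq] at hiff2
    have hne1 := mB_ne M hnxy
    have hne2 := mB_ne M hnyz0
    by_cases hY : k ∈ Y
    · have a1 := hiff1.mpr hY
      have a2 := hiff2.mpr hY
      omega
    · have a1 : ¬ mB M k x < mB M k y := fun h => hY (hiff1.mp h)
      have a2 : ¬ mB M k y < mB M k z := fun h => hY (hiff2.mp h)
      omega
  · -- y ~ z before x,y merge
    set k := kk M hn hMtop x y with hk
    have hrelyz : (M k.castSucc).r y z := by
      rw [rel_iff M hMtop hMcov]
      simp [hk, kk]
      omega
    have hnxy := (kk_newly M hn hM0 hMtop hMcov hxy).1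
    have := prec_coherent M hn hMtop hMcov Y ((M k.castSucc).refl' x) hrelyz hnxy
    exact this.mp ⟨hxy, hiff1⟩

lemma prec_convex (hn : 1 ≤ n) (hM0 : M 0 = ⊥) (hMtop : M (Fin.last n) = ⊤)
    (hMcov : ∀ i : Fin n, M i.castSucc ⋖ M i.succ) (Y : Finset (Fin n))
    {i : Fin (n+1)} {x y z : Fin (n+1)} (hrel : (M i).r x y)
    (h1 : prec M hn hMtop Y x z) (h2 : prec M hn hMtop Y z y) : (M i).r x z := by
  by_contra hnxz
  have hnzx : ¬ (M i).r z x := fun h => hnxz ((M i).symm' h)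
  have hiff := prec_coherent M hn hMtop hMcov Y ((M i).refl' z) hrel hnzx
  exact prec_asymm M hn hM0 hMtop hMcov Y h1 (hiff.mpr h2)

lemma perm_strictMono_eq_id {m : ℕ} (g : Equiv.Perm (Fin m)) (h : StrictMono ⇑g) :
    ∀ x, g x = x := by
  intro x
  have h1 : x ≤ g x := @StrictMono.le_apply (Fin m) _
    (inferInstance : WellFoundedLT (Fin m)) _ h x
  have hsymm : StrictMono ⇑g.symm := by
    intro a b hab
    rcases lt_trichotomy (g.symm a) (g.symm b) with h' | h' | h'
    · exact h'
    · exfalso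
      rw [← g.apply_symm_apply a, ← g.apply_symm_apply b, h'] at hab
      exact lt_irrefl _ hab
    · exfalso
      have := h h'
      rw [g.apply_symm_apply, g.apply_symm_apply] at this
      exact absurd hab (not_lt.mpr this.le)
  have h2 : x ≤ g.symm x := @StrictMono.le_apply (Fin m) _
    (inferInstance : WellFoundedLT (Fin m)) _ hsymm x
  have h3 : g x ≤ x := by
    have := h.monotone h2
    rwa [g.apply_symm_apply] at this
  exact le_antisymm h3 h1

/-- rank of an element in the `prec` order. -/
noncomputable def rnk (hn : 1 ≤ n) (hMtop : M (Fin.last n) = ⊤) (Y : Finset (Fin n))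
    (x : Fin (n+1)) : ℕ :=
  (Finset.univ.filter fun z => prec M hn hMtop Y z x).card

lemma prec_rnk_lt (hn : 1 ≤ n) (hM0 : M 0 = ⊥) (hMtop : M (Fin.last n) = ⊤)
    (hMcov : ∀ i : Fin n, M i.castSucc ⋖ M i.succ) (Y : Finset (Fin n))
    {x y : Fin (n+1)} (h : prec M hn hMtop Y x y) :
    rnk M hn hMtop Y x < rnk M hn hMtop Y y := by
  apply Finset.card_lt_card
  have hsub : (Finset.univ.filter fun z => prec M hn hMtop Y z x) ⊆
      (Finset.univ.filter fun z => prec M hn hMtop Y z y) := by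
    intro z hz
    simp only [Finset.mem_filter, Finset.mem_univ, true_and] at hz ⊢
    exact prec_trans M hn hM0 hMtop hMcov Y hz h
  rw [Finset.ssubset_iff_of_subset hsub]
  refine ⟨x, ?_, ?_⟩
  · simp only [Finset.mem_filter, Finset.mem_univ, true_and]
    exact h
  · simp only [Finset.mem_filter, Finset.mem_univ, true_and]
    exact prec_irrefl M hn hMtop Y x

lemma prec_iff_rnk (hn : 1 ≤ n) (hM0 : M 0 = ⊥) (hMtop : M (Fin.last n) = ⊤)
    (hMcov : ∀ i : Fin n, M i.castSucc ⋖ M i.succ) (Y : Finset (Fin n))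
    (x y : Fin (n+1)) :
    prec M hn hMtop Y x y ↔ rnk M hn hMtop Y x < rnk M hn hMtop Y y := by
  constructor
  · exact prec_rnk_lt M hn hM0 hMtop hMcov Y
  · intro h
    rcases eq_or_ne x y with rfl | hne
    · omega
    · rcases prec_total M hn hM0 hMtop hMcov Y hne with h' | h'
      · exact h'
      · exact absurd (prec_rnk_lt M hn hM0 hMtop hMcov Y h') (by omega)

lemma rnk_lt (hn : 1 ≤ n) (hMtop : M (Fin.last n) = ⊤) (Y : Finset (Fin n)) (x : Fin (n+1)) :
    rnk M hn hMtop Y x < n + 1 := by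
  have hsub : (Finset.univ.filter fun z => prec M hn hMtop Y z x) ⊆
      Finset.univ.erase x := by
    intro z hz
    simp only [Finset.mem_filter, Finset.mem_univ, true_and] at hz
    exact Finset.mem_erase.mpr ⟨hz.1, Finset.mem_univ z⟩
  have := Finset.card_le_card hsub
  rw [Finset.card_erase_of_mem (Finset.mem_univ x)] at this
  simp only [Finset.card_univ, Fintype.card_fin] at this
  unfold rnk
  omega

/-- Condition (i): the merging process of `(w,σ)` realizes the chain `M`. -/
def Cond (w : Equiv.Perm (Fin (n+1))) (σ : Equiv.Perm (Fin n)) : Prop :=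
  ∀ i : Fin (n+1), ∀ x y : Fin (n+1),
    (M i).r x y ↔ ∃ B ∈ mergeStep n w σ i, x ∈ B ∧ y ∈ B

lemma cond_adjacent {w : Equiv.Perm (Fin (n+1))} {σ : Equiv.Perm (Fin n)}
    (hC : Cond M w σ) (p : Fin n) (i : Fin (n+1)) :
    (M i).r (w p.castSucc) (w p.succ) ↔ (σ.symm p).val < i.val := by
  rw [hC i _ _, mem_mergeStep_iff]
  simp only [Equiv.symm_apply_apply, Fin.coe_castSucc, Fin.val_succ]
  constructor
  · intro h
    exact h p (by omega) (by omega)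
  · intro h j h1 h2
    have : j = p := Fin.ext (by omega)
    rwa [this]

lemma sigma_eq_kk (hn : 1 ≤ n) (hM0 : M 0 = ⊥) (hMtop : M (Fin.last n) = ⊤)
    (hMcov : ∀ i : Fin n, M i.castSucc ⋖ M i.succ)
    {w : Equiv.Perm (Fin (n+1))} {σ : Equiv.Perm (Fin n)}
    (hC : Cond M w σ) (p : Fin n) :
    σ.symm p = kk M hn hMtop (w p.castSucc) (w p.succ) := by
  have hne : w p.castSucc ≠ w p.succ :=
    fun h => (Fin.castSucc_lt_succ (i := p)).ne (w.injective h)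
  have hpos := tval_pos M hM0 hMtop hMcov hne
  have hle := tval_le M hMtop (w p.castSucc) (w p.succ)
  have key : ∀ i : Fin (n+1), tval M (w p.castSucc) (w p.succ) ≤ i.val ↔
      (σ.symm p).val < i.val := by
    intro i
    rw [← rel_iff M hMtop hMcov, cond_adjacent M hC]
  have h1 := (key ⟨tval M (w p.castSucc) (w p.succ), by omega⟩).mp (le_refl _)
  have h2 := (key ⟨(σ.symm p).val + 1, by have := (σ.symm p).isLt; omega⟩).mpr (by simp)
  simp only [Fin.val_mk] at h1 h2
  apply Fin.ext
  simp only [kk]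
  omega

lemma minL_eq (hn : 1 ≤ n) (hM0 : M 0 = ⊥) (hMtop : M (Fin.last n) = ⊤)
    (hMcov : ∀ i : Fin n, M i.castSucc ⋖ M i.succ)
    {w : Equiv.Perm (Fin (n+1))} {σ : Equiv.Perm (Fin n)}
    (hC : Cond M w σ) (i : Fin n) :
    minL n w σ i = mB M i (w (σ i).castSucc) + 1 := by
  have hAeq : {v : ℕ | ∃ p : Fin (n+1), p.val ≤ (σ i).val ∧
      (∀ j : Fin n, p.val ≤ j.val → j.val < (σ i).val → σ.symm j < i) ∧ v = (w p).val + 1} =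
      {v : ℕ | ∃ z : Fin (n+1), (M i.castSucc).r z (w (σ i).castSucc) ∧ v = z.val + 1} := by
    ext v
    simp only [Set.mem_setOf_eq]
    constructor
    · rintro ⟨p, hple, hbars, rfl⟩
      refine ⟨w p, ?_, rfl⟩
      rw [hC i.castSucc _ _, mem_mergeStep_iff]
      simp only [Equiv.symm_apply_apply, Fin.coe_castSucc]
      intro j h1 h2
      have h1' : p.val ≤ j.val := by omega
      have h2' : j.val < (σ i).val := by omega
      have := hbars j h1' h2'
      rw [Fin.lt_def] at this
      omega
    · rintro ⟨z, hrel, rfl⟩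
      refine ⟨w.symm z, ?_, ?_, by simp⟩
      · by_contra hgt
        push_neg at hgt
        rw [hC i.castSucc _ _, mem_mergeStep_iff] at hrel
        simp only [Equiv.symm_apply_apply, Fin.coe_castSucc] at hrel
        have := hrel (σ i) (by omega) (by omega)
        simp at this
      · intro j h1 h2
        rw [hC i.castSucc _ _, mem_mergeStep_iff] at hrel
        simp only [Equiv.symm_apply_apply, Fin.coe_castSucc] at hrel
        have := hrel j (by omega) (by omega)
        rw [Fin.lt_def]
        omega
  have hBne : {v : ℕ | ∃ z : Fin (n+1), (M i.castSucc).r z (w (σ i).castSucc) ∧ v = z.val}.Nonempty :=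
    ⟨(w (σ i).castSucc).val, w (σ i).castSucc, (M _).refl' _, rfl⟩
  obtain ⟨z0, hz0rel, hz0val⟩ := Nat.sInf_mem hBne
  have hAne : {v : ℕ | ∃ z : Fin (n+1), (M i.castSucc).r z (w (σ i).castSucc) ∧ v = z.val + 1}.Nonempty :=
    ⟨(w (σ i).castSucc).val + 1, w (σ i).castSucc, (M _).refl' _, rfl⟩
  unfold minL
  rw [hAeq]
  unfold mB
  apply le_antisymm
  · apply Nat.sInf_le
    exact ⟨z0, hz0rel, by omega⟩
  · obtain ⟨z1, hz1rel, hz1val⟩ := Nat.sInf_mem hAne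
    have : sInf {v : ℕ | ∃ z : Fin (n+1), (M i.castSucc).r z (w (σ i).castSucc) ∧ v = z.val}
        ≤ z1.val := Nat.sInf_le ⟨z1, hz1rel, rfl⟩
    omega

lemma minR_eq (hn : 1 ≤ n) (hM0 : M 0 = ⊥) (hMtop : M (Fin.last n) = ⊤)
    (hMcov : ∀ i : Fin n, M i.castSucc ⋖ M i.succ)
    {w : Equiv.Perm (Fin (n+1))} {σ : Equiv.Perm (Fin n)}
    (hC : Cond M w σ) (i : Fin n) :
    minR n w σ i = mB M i (w (σ i).succ) + 1 := by
  have hAeq : {v : ℕ | ∃ q : Fin (n+1), (σ i).val < q.val ∧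
      (∀ j : Fin n, (σ i).val < j.val → j.val < q.val → σ.symm j < i) ∧ v = (w q).val + 1} =
      {v : ℕ | ∃ z : Fin (n+1), (M i.castSucc).r z (w (σ i).succ) ∧ v = z.val + 1} := by
    ext v
    simp only [Set.mem_setOf_eq]
    constructor
    · rintro ⟨q, hqgt, hbars, rfl⟩
      refine ⟨w q, ?_, rfl⟩
      rw [hC i.castSucc _ _, mem_mergeStep_iff]
      simp only [Equiv.symm_apply_apply, Fin.val_succ, Fin.coe_castSucc]
      intro j h1 h2
      have h1' : (σ i).val < j.val := by omega
      have h2' : j.val < q.val := by omega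
      have := hbars j h1' h2'
      rw [Fin.lt_def] at this
      omega
    · rintro ⟨z, hrel, rfl⟩
      refine ⟨w.symm z, ?_, ?_, by simp⟩
      · by_contra hgt
        push_neg at hgt
        rw [hC i.castSucc _ _, mem_mergeStep_iff] at hrel
        simp only [Equiv.symm_apply_apply, Fin.val_succ, Fin.coe_castSucc] at hrel
        have := hrel (σ i) (by omega) (by omega)
        simp at this
      · intro j h1 h2
        rw [hC i.castSucc _ _, mem_mergeStep_iff] at hrel
        simp only [Equiv.symm_apply_apply, Fin.val_succ, Fin.coe_castSucc] at hrel
        have := hrel j (by omega) (by omega)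
        rw [Fin.lt_def]
        omega
  have hBne : {v : ℕ | ∃ z : Fin (n+1), (M i.castSucc).r z (w (σ i).succ) ∧ v = z.val}.Nonempty :=
    ⟨(w (σ i).succ).val, w (σ i).succ, (M _).refl' _, rfl⟩
  obtain ⟨z0, hz0rel, hz0val⟩ := Nat.sInf_mem hBne
  have hAne : {v : ℕ | ∃ z : Fin (n+1), (M i.castSucc).r z (w (σ i).succ) ∧ v = z.val + 1}.Nonempty :=
    ⟨(w (σ i).succ).val + 1, w (σ i).succ, (M _).refl' _, rfl⟩
  unfold minR
  rw [hAeq]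
  unfold mB
  apply le_antisymm
  · apply Nat.sInf_le
    exact ⟨z0, hz0rel, by omega⟩
  · obtain ⟨z1, hz1rel, hz1val⟩ := Nat.sInf_mem hAne
    have : sInf {v : ℕ | ∃ z : Fin (n+1), (M i.castSucc).r z (w (σ i).succ) ∧ v = z.val}
        ≤ z1.val := Nat.sInf_le ⟨z1, hz1rel, rfl⟩
    omega

lemma lam_pos_iff (hn : 1 ≤ n) (hM0 : M 0 = ⊥) (hMtop : M (Fin.last n) = ⊤)
    (hMcov : ∀ i : Fin n, M i.castSucc ⋖ M i.succ)
    {w : Equiv.Perm (Fin (n+1))} {σ : Equiv.Perm (Fin n)}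
    (hC : Cond M w σ) (i : Fin n) :
    0 < lam n w σ i ↔ mB M i (w (σ i).castSucc) < mB M i (w (σ i).succ) := by
  have hL := minL_eq M hn hM0 hMtop hMcov hC i
  have hR := minR_eq M hn hM0 hMtop hMcov hC i
  unfold lam
  by_cases h : minL n w σ i < minR n w σ i
  · rw [if_pos h]
    constructor
    · intro _; omega
    · intro _
      have : 0 < max (minL n w σ i) (minR n w σ i) := by omega
      exact_mod_cast this
  · rw [if_neg h]
    constructor
    · intro hpos
      exfalso
      have : (0:ℤ) < -(max (minL n w σ i) (minR n w σ i) : ℤ) := hpos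
      have h2 : 0 < max (minL n w σ i) (minR n w σ i) := by omega
      omega
    · intro hlt
      omega

lemma mono_adjacent (hn : 1 ≤ n) (hM0 : M 0 = ⊥) (hMtop : M (Fin.last n) = ⊤)
    (hMcov : ∀ i : Fin n, M i.castSucc ⋖ M i.succ) (Y : Finset (Fin n))
    {w : Equiv.Perm (Fin (n+1))} {σ : Equiv.Perm (Fin n)}
    (hC : Cond M w σ)
    (hY : (Finset.univ.filter fun k : Fin n => 0 < lam n w σ k) = Y) (p : Fin n) :
    prec M hn hMtop Y (w p.castSucc) (w p.succ) := by
  set i : Fin n := σ.symm p with hi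
  have hσi : σ i = p := by simp [hi]
  have hne : w p.castSucc ≠ w p.succ :=
    fun h => (Fin.castSucc_lt_succ (i := p)).ne (w.injective h)
  have hkk : kk M hn hMtop (w p.castSucc) (w p.succ) = i :=
    (sigma_eq_kk M hn hM0 hMtop hMcov hC p).symm
  refine ⟨hne, ?_⟩
  rw [hkk]
  have hYiff : i ∈ Y ↔ 0 < lam n w σ i := by
    rw [← hY]
    simp
  rw [hYiff, lam_pos_iff M hn hM0 hMtop hMcov hC i, hσi]

lemma mono_full (hn : 1 ≤ n) (hM0 : M 0 = ⊥) (hMtop : M (Fin.last n) = ⊤)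
    (hMcov : ∀ i : Fin n, M i.castSucc ⋖ M i.succ) (Y : Finset (Fin n))
    {w : Equiv.Perm (Fin (n+1))}
    (hadj : ∀ p : Fin n, prec M hn hMtop Y (w p.castSucc) (w p.succ)) :
    ∀ p q : Fin (n+1), p < q → prec M hn hMtop Y (w p) (w q) := by
  have aux : ∀ d : ℕ, ∀ p q : Fin (n+1), p.val + (d+1) = q.val →
      prec M hn hMtop Y (w p) (w q) := by
    intro d
    induction d with
    | zero =>
      intro p q hpq
      have hp : p.val < n := by have := q.isLt; omega
      have e1 : (⟨p.val, hp⟩ : Fin n).castSucc = p := Fin.ext rfl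
      have e2 : (⟨p.val, hp⟩ : Fin n).succ = q := Fin.ext (by simpa using hpq)
      have := hadj ⟨p.val, hp⟩
      rwa [e1, e2] at this
    | succ d IH =>
      intro p q hpq
      have hm : p.val + (d+1) < n + 1 := by have := q.isLt; omega
      set c : Fin (n+1) := ⟨p.val + (d+1), hm⟩ with hc
      have h1 := IH p c (by simp [hc])
      have h2 : prec M hn hMtop Y (w c) (w q) := by
        have hp : c.val < n := by have := q.isLt; simp [hc]; omega
        have e1 : (⟨c.val, hp⟩ : Fin n).castSucc = c := Fin.ext rfl
        have e2 : (⟨c.val, hp⟩ : Fin n).succ = q := Fin.ext (by simp [hc]; omega)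
        have := hadj ⟨c.val, hp⟩
        rwa [e1, e2] at this
      exact prec_trans M hn hM0 hMtop hMcov Y h1 h2
  intro p q hpq
  have hlt : p.val < q.val := hpq
  exact aux (q.val - p.val - 1) p q (by omega)

lemma cond_of (hn : 1 ≤ n) (hM0 : M 0 = ⊥) (hMtop : M (Fin.last n) = ⊤)
    (hMcov : ∀ i : Fin n, M i.castSucc ⋖ M i.succ) (Y : Finset (Fin n))
    {w : Equiv.Perm (Fin (n+1))} {σ : Equiv.Perm (Fin n)}
    (hw : ∀ p q : Fin (n+1), p < q → prec M hn hMtop Y (w p) (w q))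
    (hσ : ∀ p : Fin n, σ.symm p = kk M hn hMtop (w p.castSucc) (w p.succ)) :
    Cond M w σ := by
  have hadjne : ∀ p : Fin n, w p.castSucc ≠ w p.succ :=
    fun p h => (Fin.castSucc_lt_succ (i := p)).ne (w.injective h)
  have hadj : ∀ (j : Fin n) (i : Fin (n+1)),
      ((σ.symm j).val < i.val) ↔ (M i).r (w j.castSucc) (w j.succ) := by
    intro j i
    rw [rel_iff M hMtop hMcov, hσ j]
    have hpos := tval_pos M hM0 hMtop hMcov (hadjne j)
    simp only [kk]
    omega
  have aux2 : ∀ (i : Fin (n+1)) (d : ℕ) (a b : Fin (n+1)), a.val + d = b.val →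
      (∀ j : Fin n, a.val ≤ j.val → j.val < b.val → (M i).r (w j.castSucc) (w j.succ)) →
      (M i).r (w a) (w b) := by
    intro i d
    induction d with
    | zero =>
      intro a b hab _
      have : a = b := Fin.ext (by omega)
      rw [this]
    | succ d IH =>
      intro a b hab hall
      have hm : a.val + d < n + 1 := by have := b.isLt; omega
      set c : Fin (n+1) := ⟨a.val + d, hm⟩ with hc
      have h1 : (M i).r (w a) (w c) := IH a c (by simp [hc])
        (fun j hj1 hj2 => hall j hj1 (by simp [hc] at hj2; omega))
      have hp : c.val < n := by have := b.isLt; simp [hc]; omega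
      have e1 : (⟨c.val, hp⟩ : Fin n).castSucc = c := Fin.ext rfl
      have e2 : (⟨c.val, hp⟩ : Fin n).succ = b := Fin.ext (by simp [hc]; omega)
      have h2 := hall ⟨c.val, hp⟩ (by simp [hc]) (by simp [hc]; omega)
      rw [e1, e2] at h2
      exact (M i).trans' h1 h2
  have key : ∀ (i : Fin (n+1)) (a b : Fin (n+1)), a.val ≤ b.val →
      ((M i).r (w a) (w b) ↔
        ∀ j : Fin n, a.val ≤ j.val → j.val < b.val → (M i).r (w j.castSucc) (w j.succ)) := by
    intro i a b hab
    constructor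
    · intro h j h1 h2
      have hjsucc : (M i).r (w a) (w j.succ) := by
        rcases Nat.lt_or_ge (j.val + 1) b.val with hlt | hge
        · refine prec_convex M hn hM0 hMtop hMcov Y h ?_ ?_
          · exact hw a j.succ (by rw [Fin.lt_def]; simp; omega)
          · exact hw j.succ b (by rw [Fin.lt_def]; simp; omega)
        · have : j.succ = b := Fin.ext (by simp; omega)
          rwa [this]
      have hjcs : (M i).r (w a) (w j.castSucc) := by
        rcases Nat.lt_or_ge a.val j.val with hlt | hge
        · refine prec_convex M hn hM0 hMtop hMcov Y h ?_ ?_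
          · exact hw a j.castSucc (by rw [Fin.lt_def]; simp; omega)
          · exact hw j.castSucc b (by rw [Fin.lt_def]; simp; omega)
        · have : j.castSucc = a := Fin.ext (by simp; omega)
          rw [this]
      exact (M i).trans' ((M i).symm' hjcs) hjsucc
    · intro h
      exact aux2 i (b.val - a.val) a b (by omega) h
  intro i x y
  rw [mem_mergeStep_iff]
  have main : ∀ a b : Fin (n+1), a.val ≤ b.val →
      ((M i).r (w a) (w b) ↔
        ∀ j : Fin n, min a.val b.val ≤ j.val → j.val < max a.val b.val →
          (σ.symm j).val < i.val) := by
    intro a b hab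
    rw [key i a b hab]
    constructor
    · intro h j h1 h2
      rw [hadj j i]
      exact h j (by omega) (by omega)
    · intro h j h1 h2
      exact (hadj j i).mp (h j (by omega) (by omega))
  rcases le_total (w.symm x).val (w.symm y).val with hab | hab
  · have := main (w.symm x) (w.symm y) hab
    simpa using this
  · have hmain := main (w.symm y) (w.symm x) hab
    simp only [Equiv.apply_symm_apply] at hmain
    rw [Setoid.comm', hmain]
    constructor <;> (intro h j h1 h2; exact h j (by omega) (by omega))
end SK14

open SK14

/-- For every maximal chain `⊥ = M_0 ⋖ ⋯ ⋖ M_n = ⊤` in the set partition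
lattice `Π_n` (modelled as the lattice of setoids on `Fin (n+1)`, ordered
finer-below-coarser) and every subset `Y ⊆ {1,…,n}`, there is a unique pair
`(w,σ) ∈ S_{n+1} × Sym(n)` such that (i) for every `i`, the unordered set partition
underlying the `i`-th set composition of the merging process of `(w,σ)` equals `M_i`
(two elements are related by `M_i` iff they lie in a common block), and
(ii) `{i : λ_i(w,σ) > 0} = Y`. -/
theorem chain_and_sign_set_determine_pair (n : ℕ) (hn : 1 ≤ n)
    (M : Fin (n+1) → Setoid (Fin (n+1)))
    (hM0 : M 0 = ⊥) (hMtop : M (Fin.last n) = ⊤)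
    (hMcov : ∀ i : Fin n, M i.castSucc ⋖ M i.succ)
    (Y : Finset (Fin n)) :
    ∃! ws : Equiv.Perm (Fin (n+1)) × Equiv.Perm (Fin n),
      (∀ i : Fin (n+1), ∀ x y : Fin (n+1),
          (M i).r x y ↔ ∃ B ∈ mergeStep n ws.1 ws.2 i, x ∈ B ∧ y ∈ B)
        ∧ (Finset.univ.filter fun k : Fin n => 0 < lam n ws.1 ws.2 k) = Y := by
  classical
  -- construct w0
  set f : Fin (n+1) → Fin (n+1) := fun x => ⟨rnk M hn hMtop Y x, rnk_lt M hn hMtop Y x⟩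
    with hf
  have hfinj : Function.Injective f := by
    intro x y hxy
    by_contra hne
    have hv : rnk M hn hMtop Y x = rnk M hn hMtop Y y := congrArg Fin.val hxy
    rcases prec_total M hn hM0 hMtop hMcov Y hne with h | h
    · have := prec_rnk_lt M hn hM0 hMtop hMcov Y h; omega
    · have := prec_rnk_lt M hn hM0 hMtop hMcov Y h; omega
  set e : Equiv.Perm (Fin (n+1)) :=
    Equiv.ofBijective f (Finite.injective_iff_bijective.mp hfinj) with he
  set w0 : Equiv.Perm (Fin (n+1)) := e.symm with hw0
  have hw0rnk : ∀ p : Fin (n+1), rnk M hn hMtop Y (w0 p) = p.val := by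
    intro p
    have : e (w0 p) = p := e.apply_symm_apply p
    have := congrArg Fin.val this
    rwa [show (e (w0 p)).val = rnk M hn hMtop Y (w0 p) from rfl] at this
  have hw0mono : ∀ p q : Fin (n+1), p < q → prec M hn hMtop Y (w0 p) (w0 q) := by
    intro p q hpq
    rw [prec_iff_rnk M hn hM0 hMtop hMcov Y, hw0rnk, hw0rnk]
    exact hpq
  -- construct σ0
  set s : Fin n → Fin n := fun p => kk M hn hMtop (w0 p.castSucc) (w0 p.succ) with hs
  have hadjprec : ∀ p : Fin n, prec M hn hMtop Y (w0 p.castSucc) (w0 p.succ) :=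
    fun p => hw0mono p.castSucc p.succ (Fin.castSucc_lt_succ (i := p))
  have hadjne : ∀ p : Fin n, w0 p.castSucc ≠ w0 p.succ := fun p => (hadjprec p).1
  have hsinj : Function.Injective s := by
    intro p p' hsp
    by_contra hne
    set k := s p with hk
    set x := w0 p.castSucc
    set y := w0 p.succ
    set x' := w0 p'.castSucc
    set y' := w0 p'.succ
    have hkxy : kk M hn hMtop x y = k := rfl
    have hkxy' : kk M hn hMtop x' y' = k := hsp.symm
    have hnxy : ¬ (M k.castSucc).r x y := by
      have := (kk_newly M hn hM0 hMtop hMcov (hadjne p)).1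
      rwa [hkxy] at this
    have hrxy : (M k.succ).r x y := by
      have := (kk_newly M hn hM0 hMtop hMcov (hadjne p)).2
      rwa [hkxy] at this
    have hnxy' : ¬ (M k.castSucc).r x' y' := by
      have := (kk_newly M hn hM0 hMtop hMcov (hadjne p')).1
      rwa [hkxy'] at this
    have hrxy' : (M k.succ).r x' y' := by
      have := (kk_newly M hn hM0 hMtop hMcov (hadjne p')).2
      rwa [hkxy'] at this
    have hstruct := cover_struct (hMcov k) hnxy hrxy x' y'
    have hprecxy : prec M hn hMtop Y x y := hadjprec p
    have hprecxy' : prec M hn hMtop Y x' y' := hadjprec p'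
    rcases hstruct.mp hrxy' with h0 | ⟨ha, hb⟩ | ⟨ha, hb⟩
    · exact hnxy' h0
    · -- ha : r x' x, hb : r y y'
      rcases lt_or_gt_of_ne hne with hlt | hgt
      · -- p < p' : p.succ ≤ p'.castSucc
        have hple : p.succ.val ≤ p'.castSucc.val := by
          simp only [Fin.val_succ, Fin.coe_castSucc]
          exact hlt
        rcases eq_or_lt_of_le hple with heq | hlt'
        · have : y = x' := congrArg w0 (Fin.ext heq)
          rw [← this] at ha
          exact hnxy ((M _).symm' ha)
        · have hprecyx' : prec M hn hMtop Y y x' := hw0mono _ _ hlt'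
          have hnyx' : ¬ (M k.castSucc).r y x' := by
            intro h
            exact hnxy ((M _).symm' ((M _).trans' h ((M _).symm' ((M _).symm' ha))))
          have hcoh := prec_coherent M hn hMtop hMcov Y
            ((M k.castSucc).refl' y) ha hnyx'
          have : prec M hn hMtop Y y x := hcoh.mp hprecyx'
          exact prec_asymm M hn hM0 hMtop hMcov Y hprecxy this
      · -- p' < p : p'.succ ≤ p.castSucc
        have hple : p'.succ.val ≤ p.castSucc.val := by
          simp only [Fin.val_succ, Fin.coe_castSucc]
          exact hgt
        rcases eq_or_lt_of_le hple with heq | hlt'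
        · have : y' = x := congrArg w0 (Fin.ext heq)
          rw [← this] at hnxy
          exact hnxy ((M _).symm' hb)
        · have hprecy'x : prec M hn hMtop Y y' x := hw0mono _ _ hlt'
          have hny'x : ¬ (M k.castSucc).r y' x := by
            intro h
            exact hnxy ((M _).symm' ((M _).trans' hb h))
          have hcoh := prec_coherent M hn hMtop hMcov Y
            ((M k.castSucc).symm' hb) ((M k.castSucc).symm' ha) hny'x
          have hyx' : prec M hn hMtop Y y x' := hcoh.mp hprecy'x
          -- x ≺ y ≺ x' ≺ y' but p'.castSucc < p.castSucc: prec x' x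
          have h1 : prec M hn hMtop Y x x' :=
            prec_trans M hn hM0 hMtop hMcov Y hprecxy hyx'
          have h2 : prec M hn hMtop Y x' x := by
            apply hw0mono
            rw [Fin.lt_def]
            simp only [Fin.coe_castSucc]
            omega
          exact prec_asymm M hn hM0 hMtop hMcov Y h1 h2
    · -- ha : r x' y, hb : r x y'
      have hny'x' : ¬ (M k.castSucc).r x' y' := hnxy'
      have hcoh := prec_coherent M hn hMtop hMcov Y ha ((M k.castSucc).symm' hb) hny'x'
      have : prec M hn hMtop Y y x := hcoh.mp hprecxy'
      exact prec_asymm M hn hM0 hMtop hMcov Y hprecxy this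
  set es : Equiv.Perm (Fin n) :=
    Equiv.ofBijective s (Finite.injective_iff_bijective.mp hsinj) with hes
  set σ0 : Equiv.Perm (Fin n) := es.symm with hσ0
  have hσ0symm : ∀ p : Fin n, σ0.symm p = s p := fun p => rfl
  have hC0 : Cond M w0 σ0 := cond_of M hn hM0 hMtop hMcov Y hw0mono hσ0symm
  have hsign : (Finset.univ.filter fun k : Fin n => 0 < lam n w0 σ0 k) = Y := by
    ext i
    simp only [Finset.mem_filter, Finset.mem_univ, true_and]
    rw [lam_pos_iff M hn hM0 hMtop hMcov hC0 i]
    set p := σ0 i with hp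
    have hsp : s p = i := by
      rw [hp, hσ0]
      exact es.apply_symm_apply i
    have hkk : kk M hn hMtop (w0 p.castSucc) (w0 p.succ) = i := hsp
    have hiff := (hadjprec p).2
    rw [hkk] at hiff
    exact hiff
  refine ⟨(w0, σ0), ⟨fun i x y => hC0 i x y, hsign⟩, ?_⟩
  rintro ⟨w', σ'⟩ ⟨h1, h2⟩
  have hC' : Cond M w' σ' := h1
  have hadj' : ∀ p : Fin n, prec M hn hMtop Y (w' p.castSucc) (w' p.succ) :=
    mono_adjacent M hn hM0 hMtop hMcov Y hC' h2
  have hmono' := mono_full M hn hM0 hMtop hMcov Y hadj'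
  have hweq : w' = w0 := by
    have hg : StrictMono ⇑(w'.trans e) := by
      intro a b hab
      have := prec_rnk_lt M hn hM0 hMtop hMcov Y (hmono' a b hab)
      rw [Fin.lt_def]
      exact this
    have hid := perm_strictMono_eq_id (w'.trans e) hg
    ext x
    have := hid x
    rw [Equiv.trans_apply] at this
    have := congrArg e.symm this
    rw [Equiv.symm_apply_apply] at this
    rw [this]
  have hσeq : σ' = σ0 := by
    have hsymm : ∀ p : Fin n, σ'.symm p = σ0.symm p := by
      intro p
      rw [sigma_eq_kk M hn hM0 hMtop hMcov hC' p, hσ0symm p, hweq]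
    have : σ'.symm = σ0.symm := Equiv.ext hsymm
    simpa using congrArg Equiv.symm this
  rw [Prod.mk.injEq]
  exact ⟨hweq, hσeq⟩
end
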